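/- arXiv:2203.12174 — 4 statements merged into one kernel-verified Lean document; each statement's English description precedes it below -/
import Mathlib

section
/- Let T : K → H be a relative Rota-Baxter operator with respect to a cocommutative left H-module bialgebra (K, ⇀). Define S_T(a) = S_H(T(a₁)) ⇀ S_K(a₂). Then T ∘ S_T = S_H ∘ T. -/
/-!
Relative Rota–Baxter operators on Hopf algebras (Li–Sheng–Tang).
`K` is a left `H`-module bialgebra via `act : H ⊗ K →ₗ K`, and
`T : K →ₗ H` is a coalgebra homomorphism satisfying the relative
Rota–Baxter identity `T(a)·T(b) = T(a₁·(T(a₂) ⇀ b))`.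
Sweedler sums are expressed by applying linear maps to `Coalgebra.comul`.
-/

open TensorProduct Coalgebra LinearMap HopfAlgebra

variable (R H K : Type*) [CommRing R] [Ring H] [HopfAlgebra R H]
  [Ring K] [HopfAlgebra R K]

/-- Cocommutativity of a coalgebra. -/
def IsCocomm (A : Type*) [AddCommGroup A] [Module R A] [Coalgebra R A] : Prop :=
  ∀ x : A, (TensorProduct.comm R A A) (Coalgebra.comul x) = Coalgebra.comul x

/-- `K` is a left `H`-module bialgebra via `act`: a module, a module algebra
and a module coalgebra. -/
structure IsModuleBialgebra (act : H ⊗[R] K →ₗ[R] K) : Prop where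
  /-- `1 ⇀ a = a` -/
  one_act : ∀ a : K, act ((1 : H) ⊗ₜ a) = a
  /-- `(x·y) ⇀ a = x ⇀ (y ⇀ a)` -/
  mul_act : ∀ (x y : H) (a : K), act ((x * y) ⊗ₜ a) = act (x ⊗ₜ act (y ⊗ₜ a))
  /-- `x ⇀ (a·b) = (x₁ ⇀ a)·(x₂ ⇀ b)` -/
  act_mul : ∀ (x : H) (a b : K),
    act (x ⊗ₜ (a * b))
      = LinearMap.mul' R K
          (TensorProduct.map (act ∘ₗ (TensorProduct.mk R H K).flip a)
            (act ∘ₗ (TensorProduct.mk R H K).flip b) (Coalgebra.comul x))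
  /-- `x ⇀ 1 = ε(x)·1` -/
  act_one : ∀ x : H, act (x ⊗ₜ (1 : K)) = Coalgebra.counit (R := R) x • (1 : K)
  /-- `act` is comultiplicative -/
  comul_act : Coalgebra.comul ∘ₗ act
      = TensorProduct.map act act ∘ₗ (Coalgebra.comul (R := R) (A := H ⊗[R] K))
  /-- `act` is counital -/
  counit_act : Coalgebra.counit ∘ₗ act = (Coalgebra.counit (R := R) (A := H ⊗[R] K))

/-- `T : K → H` is a coalgebra homomorphism. -/
structure IsCoalgHom (T : K →ₗ[R] H) : Prop where
  comul_comp : Coalgebra.comul ∘ₗ T = TensorProduct.map T T ∘ₗ Coalgebra.comul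
  counit_comp : Coalgebra.counit ∘ₗ T = (Coalgebra.counit (R := R) (A := K))

/-- The descendent product `a *_T b = a₁·(T(a₂) ⇀ b)` as a linear map. -/
noncomputable def descProd (act : H ⊗[R] K →ₗ[R] K) (T : K →ₗ[R] H) :
    K ⊗[R] K →ₗ[R] K :=
  LinearMap.mul' R K
    ∘ₗ TensorProduct.map LinearMap.id (act ∘ₗ TensorProduct.map T LinearMap.id)
    ∘ₗ (TensorProduct.assoc R K K K).toLinearMap
    ∘ₗ TensorProduct.map Coalgebra.comul LinearMap.id

/-- The relative Rota–Baxter identity `T(a)·T(b) = T(a₁·(T(a₂) ⇀ b))`. -/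
def IsRelRotaBaxter (act : H ⊗[R] K →ₗ[R] K) (T : K →ₗ[R] H) : Prop :=
  ∀ a b : K, T a * T b = T (descProd R H K act T (a ⊗ₜ b))

/-- `S_T(a) = S_H(T(a₁)) ⇀ S_K(a₂)`. -/
noncomputable def descAntipode (act : H ⊗[R] K →ₗ[R] K) (T : K →ₗ[R] H) :
    K →ₗ[R] K :=
  act ∘ₗ TensorProduct.map ((HopfAlgebra.antipode (R := R) (A := H)) ∘ₗ T)
          (HopfAlgebra.antipode (R := R) (A := K))
    ∘ₗ Coalgebra.comul


section Aux

variable {R H K}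

/-- Convolution product on `Hom(K, H)`. -/
noncomputable def myconv (f g : K →ₗ[R] H) : K →ₗ[R] H :=
  LinearMap.mul' R H ∘ₗ TensorProduct.map f g ∘ₗ Coalgebra.comul

/-- Convolution unit. -/
noncomputable def cunit : K →ₗ[R] H := Algebra.linearMap R H ∘ₗ Coalgebra.counit

lemma myconv_assoc (f g h : K →ₗ[R] H) : myconv (myconv f g) h = myconv f (myconv g h) := by
  unfold myconv
  rw [← rTensor_comp_map, ← map_comp_rTensor, ← lTensor_comp_map, ← map_comp_lTensor]
  simp only [comp_assoc]
  rw [← Coalgebra.coassoc]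
  simp only [← comp_assoc]
  congr 1
  congr 1
  simp only [comp_assoc]
  apply TensorProduct.ext_threefold
  intro a b c
  simp [mul_assoc]

lemma myconv_cunit_left (f : K →ₗ[R] H) : myconv cunit f = f := by
  unfold myconv cunit
  have h : TensorProduct.map (Algebra.linearMap R H ∘ₗ Coalgebra.counit) f
      = TensorProduct.map (Algebra.linearMap R H) f
          ∘ₗ LinearMap.rTensor K (Coalgebra.counit (R := R) (A := K)) := by
    rw [map_comp_rTensor]
  rw [h, comp_assoc, Coalgebra.rTensor_counit_comp_comul]
  ext a
  simp

lemma myconv_cunit_right (f : K →ₗ[R] H) : myconv f cunit = f := by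
  unfold myconv cunit
  have h : TensorProduct.map f (Algebra.linearMap R H ∘ₗ Coalgebra.counit)
      = TensorProduct.map f (Algebra.linearMap R H)
          ∘ₗ LinearMap.lTensor K (Coalgebra.counit (R := R) (A := K)) := by
    rw [map_comp_lTensor]
  rw [h, comp_assoc, Coalgebra.lTensor_counit_comp_comul]
  ext a
  simp

end Aux

section Main

variable {R H K}
variable (act : H ⊗[R] K →ₗ[R] K) (T : K →ₗ[R] H)

/-- Module-algebra associativity at the tensor level. -/
lemma act_assoc_lmap (hmb : IsModuleBialgebra R H K act) :
    act ∘ₗ LinearMap.lTensor H act ∘ₗ (TensorProduct.assoc R H H K).toLinearMap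
      = act ∘ₗ LinearMap.rTensor K (LinearMap.mul' R H) := by
  apply TensorProduct.ext_threefold
  intro x y a
  simp [hmb.mul_act x y a]

/-- `Σ T(a₁) · S_H(T(a₂)) = ε(a) 1`. -/
lemma W_comul (hT : IsCoalgHom R H K T) :
    LinearMap.mul' R H
        ∘ₗ TensorProduct.map T ((HopfAlgebra.antipode (R := R) (A := H)) ∘ₗ T)
        ∘ₗ Coalgebra.comul
      = Algebra.linearMap R H ∘ₗ Coalgebra.counit := by
  have h1 : TensorProduct.map T ((HopfAlgebra.antipode (R := R) (A := H)) ∘ₗ T)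
      = LinearMap.lTensor H (HopfAlgebra.antipode (R := R) (A := H))
          ∘ₗ TensorProduct.map T T := by
    rw [lTensor_comp_map]
  rw [h1, comp_assoc, ← hT.comul_comp]
  have step : LinearMap.mul' R H ∘ₗ LinearMap.lTensor H (HopfAlgebra.antipode (R := R) (A := H))
        ∘ₗ Coalgebra.comul ∘ₗ T
      = (LinearMap.mul' R H ∘ₗ LinearMap.lTensor H (HopfAlgebra.antipode (R := R) (A := H))
        ∘ₗ Coalgebra.comul) ∘ₗ T := by
    simp only [comp_assoc]
  rw [step, HopfAlgebra.mul_antipode_lTensor_comul, comp_assoc, hT.counit_comp]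

/-- The Rota-Baxter identity as an identity of linear maps. -/
lemma rb_lmap (hrb : IsRelRotaBaxter R H K act T) :
    LinearMap.mul' R H ∘ₗ TensorProduct.map T T = T ∘ₗ descProd R H K act T := by
  apply TensorProduct.ext'
  intro a b
  simpa using hrb a b

lemma T_one (hmb : IsModuleBialgebra R H K act) (hT : IsCoalgHom R H K T)
    (hrb : IsRelRotaBaxter R H K act T) : T 1 = 1 := by
  have hcounit : Coalgebra.counit (R := R) (T (1 : K)) = 1 := by
    have := LinearMap.congr_fun hT.counit_comp (1 : K)
    simpa using this
  have hcomul : Coalgebra.comul (R := R) (T (1 : K)) = T 1 ⊗ₜ[R] T 1 := by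
    have := LinearMap.congr_fun hT.comul_comp (1 : K)
    rw [LinearMap.comp_apply, LinearMap.comp_apply, Bialgebra.comul_one,
      Algebra.TensorProduct.one_def, TensorProduct.map_tmul] at this
    exact this
  have hdesc : descProd R H K act T ((1 : K) ⊗ₜ[R] (1 : K)) = 1 := by
    simp [descProd, Bialgebra.comul_one, Algebra.TensorProduct.one_def, hmb.act_one, hcounit]
  have hTT : T 1 * T 1 = T 1 := by
    have := hrb 1 1
    rw [hdesc] at this
    exact this
  have hS : (HopfAlgebra.antipode (R := R) (A := H)) (T 1) * T 1 = 1 := by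
    have := HopfAlgebra.mul_antipode_rTensor_comul_apply (R := R) (a := T (1 : K))
    rw [hcomul, hcounit] at this
    simpa using this
  calc T 1 = 1 * T 1 := (one_mul _).symm
    _ = ((HopfAlgebra.antipode (R := R) (A := H)) (T 1) * T 1) * T 1 := by rw [hS]
    _ = (HopfAlgebra.antipode (R := R) (A := H)) (T 1) * (T 1 * T 1) := by rw [mul_assoc]
    _ = (HopfAlgebra.antipode (R := R) (A := H)) (T 1) * T 1 := by rw [hTT]
    _ = 1 := hS

/-- naturality of the associator w.r.t. the third slot -/
lemma assoc_lT (f : K →ₗ[R] K) :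
    (TensorProduct.assoc R K K K).toLinearMap ∘ₗ LinearMap.lTensor (K ⊗[R] K) f
      = LinearMap.lTensor K (LinearMap.lTensor K f)
          ∘ₗ (TensorProduct.assoc R K K K).toLinearMap := by
  apply TensorProduct.ext_threefold
  intro a b c
  simp

set_option synthInstance.maxHeartbeats 400000 in
set_option maxHeartbeats 1000000 in
/-- The key computation: `a₁ ·_T S_T(a₂) = ε(a) 1`. -/
lemma descProd_descAntipode (hmb : IsModuleBialgebra R H K act) (hT : IsCoalgHom R H K T) :
    descProd R H K act T ∘ₗ LinearMap.lTensor K (descAntipode R H K act T) ∘ₗ Coalgebra.comul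
      = Algebra.linearMap R K ∘ₗ Coalgebra.counit := by
  set SH := HopfAlgebra.antipode (R := R) (A := H) with hSH
  set SK := HopfAlgebra.antipode (R := R) (A := K) with hSK
  set ST := descAntipode R H K act T with hST
  set A := act ∘ₗ TensorProduct.map T (LinearMap.id (R := R) (M := K)) with hA
  set Q := A ∘ₗ LinearMap.lTensor K ST with hQ
  set W := LinearMap.mul' R H ∘ₗ TensorProduct.map T (SH ∘ₗ T) with hW
  -- Step 1: descProd ∘ lT ST = mK ∘ lT Q ∘ assoc ∘ rT Δ
  have C1 : descProd R H K act T ∘ₗ LinearMap.lTensor K ST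
      = LinearMap.mul' R K ∘ₗ LinearMap.lTensor K Q
          ∘ₗ (TensorProduct.assoc R K K K).toLinearMap
          ∘ₗ LinearMap.rTensor K (Coalgebra.comul (R := R) (A := K)) := by
    apply TensorProduct.ext'
    intro x y
    simp only [comp_apply, lTensor_tmul, rTensor_tmul, descProd, TensorProduct.map_tmul,
      LinearMap.id_apply, LinearEquiv.coe_coe]
    generalize Coalgebra.comul (R := R) x = w
    induction w using TensorProduct.induction_on with
    | zero => simp only [TensorProduct.zero_tmul, map_zero]
    | tmul p q =>
        simp only [TensorProduct.assoc_tmul, TensorProduct.map_tmul, LinearMap.id_apply,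
          lTensor_tmul, mul'_apply, hQ, hA, comp_apply]
    | add w1 w2 ih1 ih2 =>
        simp only [TensorProduct.add_tmul, map_add, ih1, ih2]
  -- Step 2: Q = act ∘ (W ⊗ SK) ∘ assoc⁻¹ ∘ (id ⊗ Δ)
  have C2a : Q = act ∘ₗ TensorProduct.map W SK
      ∘ₗ (TensorProduct.assoc R K K K).symm.toLinearMap
      ∘ₗ LinearMap.lTensor K (Coalgebra.comul (R := R) (A := K)) := by
    apply TensorProduct.ext'
    intro x y
    simp only [comp_apply, lTensor_tmul, hQ, hA, hST, descAntipode, TensorProduct.map_tmul,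
      LinearMap.id_apply, LinearEquiv.coe_coe]
    generalize Coalgebra.comul (R := R) y = z
    induction z using TensorProduct.induction_on with
    | zero => simp only [map_zero, TensorProduct.tmul_zero]
    | tmul u v =>
        simp only [TensorProduct.map_tmul, TensorProduct.assoc_symm_tmul, comp_apply,
          LinearMap.id_apply, lTensor_tmul, hW, mul'_apply]
        rw [← hmb.mul_act]
    | add z1 z2 ih1 ih2 =>
        simp only [map_add, TensorProduct.tmul_add, ih1, ih2]
  -- Step 3: Q ∘ Δ = SK
  have C2 : Q ∘ₗ (Coalgebra.comul (R := R) (A := K)) = SK := by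
    ext y
    simp only [comp_apply]
    rw [C2a]
    simp only [comp_apply, LinearEquiv.coe_coe]
    rw [Coalgebra.coassoc_symm_apply]
    have hw : TensorProduct.map W SK
        (LinearMap.rTensor K (Coalgebra.comul (R := R) (A := K)) (Coalgebra.comul y))
        = TensorProduct.map (W ∘ₗ Coalgebra.comul) SK (Coalgebra.comul y) := by
      rw [← comp_apply, map_comp_rTensor]
    rw [hw, hW]
    have hw' : TensorProduct.map
          ((LinearMap.mul' R H ∘ₗ TensorProduct.map T (SH ∘ₗ T)) ∘ₗ Coalgebra.comul) SK
          (Coalgebra.comul y)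
        = TensorProduct.map (Algebra.linearMap R H ∘ₗ Coalgebra.counit) SK
          (Coalgebra.comul y) := by
      rw [comp_assoc, W_comul T hT]
    rw [hw']
    have hw2 : (TensorProduct.map (Algebra.linearMap R H) SK
          ∘ₗ LinearMap.rTensor K (Coalgebra.counit (R := R) (A := K))) (Coalgebra.comul y)
        = TensorProduct.map (Algebra.linearMap R H ∘ₗ Coalgebra.counit) SK
            (Coalgebra.comul y) := by
      rw [map_comp_rTensor]
    rw [← hw2, comp_apply, Coalgebra.rTensor_counit_comul]
    have : act ((algebraMap R H) 1 ⊗ₜ[R] SK y) = SK y := by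
      rw [map_one]
      exact hmb.one_act _
    simpa using this
  -- Assemble
  ext a
  simp only [comp_apply]
  rw [← comp_apply (descProd R H K act T), C1]
  simp only [comp_apply, LinearEquiv.coe_coe]
  rw [Coalgebra.coassoc_apply, ← lTensor_comp_apply, C2]
  simp [hSK]

end Main

/-- For a relative Rota–Baxter operator `T : K → H` with respect to a
cocommutative left `H`-module bialgebra `(K, ⇀)`, with
`S_T(a) = S_H(T(a₁)) ⇀ S_K(a₂)`, one has `T ∘ S_T = S_H ∘ T`. -/
theorem T_descAntipode (act : H ⊗[R] K →ₗ[R] K) (T : K →ₗ[R] H)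
    (hmb : IsModuleBialgebra R H K act) (hT : IsCoalgHom R H K T)
    (hrb : IsRelRotaBaxter R H K act T) (hco : _root_.IsCocomm R K) :
    T ∘ₗ descAntipode R H K act T
      = (HopfAlgebra.antipode (R := R) (A := H)) ∘ₗ T := by
  have h1 : myconv ((HopfAlgebra.antipode (R := R) (A := H)) ∘ₗ T) T = cunit := by
    unfold myconv cunit
    rw [← rTensor_comp_map, comp_assoc, ← hT.comul_comp]
    have step : LinearMap.mul' R H ∘ₗ LinearMap.rTensor H (HopfAlgebra.antipode (R := R) (A := H))
          ∘ₗ Coalgebra.comul ∘ₗ T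
        = (LinearMap.mul' R H ∘ₗ LinearMap.rTensor H (HopfAlgebra.antipode (R := R) (A := H))
          ∘ₗ Coalgebra.comul) ∘ₗ T := by
      simp only [comp_assoc]
    rw [step, HopfAlgebra.mul_antipode_rTensor_comul, comp_assoc, hT.counit_comp]
  have h2 : myconv T (T ∘ₗ descAntipode R H K act T) = cunit := by
    unfold myconv cunit
    rw [← map_comp_lTensor, ← comp_assoc, ← comp_assoc, rb_lmap act T hrb,
      comp_assoc, comp_assoc, descProd_descAntipode act T hmb hT]
    rw [← comp_assoc]
    congr 1
    apply LinearMap.ext_ring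
    simp [T_one act T hmb hT hrb]
  calc T ∘ₗ descAntipode R H K act T
      = myconv cunit (T ∘ₗ descAntipode R H K act T) := (myconv_cunit_left _).symm
    _ = myconv (myconv ((HopfAlgebra.antipode (R := R) (A := H)) ∘ₗ T) T)
          (T ∘ₗ descAntipode R H K act T) := by rw [h1]
    _ = myconv ((HopfAlgebra.antipode (R := R) (A := H)) ∘ₗ T)
          (myconv T (T ∘ₗ descAntipode R H K act T)) := myconv_assoc _ _ _
    _ = myconv ((HopfAlgebra.antipode (R := R) (A := H)) ∘ₗ T) cunit := by rw [h2]
    _ = (HopfAlgebra.antipode (R := R) (A := H)) ∘ₗ T := myconv_cunit_right _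
end

section
/- Let T : K → H be a relative Rota-Baxter operator with respect to a cocommutative left H-module bialgebra (K, ⇀). Then (K, *_T, 1, Δ, ε, S_T) is a Hopf algebra, where a *_T b = a₁(T(a₂) ⇀ b) and S_T(a) = S_H(T(a₁)) ⇀ S_K(a₂), and T : (K, *_T) → H is an algebra homomorphism. -/
set_option maxHeartbeats 1000000
set_option synthInstance.maxHeartbeats 400000



/-!
Relative Rota–Baxter operators on Hopf algebras (Li–Sheng–Tang).
`K` is a left `H`-module bialgebra via `act : H ⊗ K →ₗ K`, and
`T : K →ₗ H` is a coalgebra homomorphism satisfying the relative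
Rota–Baxter identity `T(a)·T(b) = T(a₁·(T(a₂) ⇀ b))`.
Sweedler sums are expressed by applying linear maps to `Coalgebra.comul`.
-/

open TensorProduct Coalgebra LinearMap HopfAlgebra

variable (R H K : Type*) [CommRing R] [Ring H] [HopfAlgebra R H]
  [Ring K] [HopfAlgebra R K]

noncomputable section RBToolSec
namespace RBTool


variable {R A : Type*} [CommRing R] [AddCommGroup A] [Module R A] [Coalgebra R A]

/-- canonical Δ² (right comb), K → K⊗(K⊗K) -/
def D2 : A →ₗ[R] A ⊗[R] (A ⊗[R] A) := lTensor A comul ∘ₗ comul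

/-- canonical Δ³ (right comb) -/
def D3 : A →ₗ[R] A ⊗[R] (A ⊗[R] (A ⊗[R] A)) :=
  lTensor A (lTensor A comul) ∘ₗ (D2 (R := R) (A := A))

lemma D2_rc (a : A) (r : Coalgebra.Repr R a (A × A)) (q : ∀ i, Coalgebra.Repr R (r.right i) (A × A)) :
    D2 (R := R) a = ∑ i ∈ r.index, ∑ k ∈ (q i).index,
      r.left i ⊗ₜ[R] ((q i).left k ⊗ₜ[R] (q i).right k) := by
  simp only [D2, comp_apply, ← r.eq, map_sum, lTensor_tmul]
  refine Finset.sum_congr rfl fun i _ => ?_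
  rw [← (q i).eq, tmul_sum]

lemma D2_lc (a : A) (r : Coalgebra.Repr R a (A × A)) (p : ∀ i, Coalgebra.Repr R (r.left i) (A × A)) :
    D2 (R := R) a = ∑ i ∈ r.index, ∑ j ∈ (p i).index,
      (p i).left j ⊗ₜ[R] ((p i).right j ⊗ₜ[R] r.right i) := by
  rw [D2_rc a r (fun i => ℛ R (r.right i))]
  exact (sum_tmul_tmul_eq r p _).symm

lemma D3_rc (a : A) (r : Coalgebra.Repr R a (A × A)) (q : ∀ i, Coalgebra.Repr R (r.right i) (A × A))
    (s : ∀ i k, Coalgebra.Repr R ((q i).right k) (A × A)) :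
    D3 (R := R) a = ∑ i ∈ r.index, ∑ k ∈ (q i).index, ∑ m ∈ (s i k).index,
      r.left i ⊗ₜ[R] ((q i).left k ⊗ₜ[R] ((s i k).left m ⊗ₜ[R] (s i k).right m)) := by
  simp only [D3, comp_apply, D2_rc a r q, map_sum, lTensor_tmul]
  refine Finset.sum_congr rfl fun i _ => Finset.sum_congr rfl fun k _ => ?_
  rw [← (s i k).eq, tmul_sum, tmul_sum]

/-- tree ((12)(34)) -/
lemma D3_t2 (a : A) (r : Coalgebra.Repr R a (A × A)) (p : ∀ i, Coalgebra.Repr R (r.left i) (A × A))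
    (q : ∀ i, Coalgebra.Repr R (r.right i) (A × A)) :
    D3 (R := R) a = ∑ i ∈ r.index, ∑ j ∈ (p i).index, ∑ k ∈ (q i).index,
      (p i).left j ⊗ₜ[R] ((p i).right j ⊗ₜ[R] ((q i).left k ⊗ₜ[R] (q i).right k)) := by
  simp only [D3, comp_apply, D2_lc a r p, map_sum, lTensor_tmul]
  refine Finset.sum_congr rfl fun i _ => Finset.sum_congr rfl fun j _ => ?_
  rw [← (q i).eq, tmul_sum, tmul_sum]

/-- tree (1((23)4)) -/
lemma D3_t4 (a : A) (r : Coalgebra.Repr R a (A × A)) (q : ∀ i, Coalgebra.Repr R (r.right i) (A × A))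
    (e : ∀ i k, Coalgebra.Repr R ((q i).left k) (A × A)) :
    D3 (R := R) a = ∑ i ∈ r.index, ∑ k ∈ (q i).index, ∑ m ∈ (e i k).index,
      r.left i ⊗ₜ[R] ((e i k).left m ⊗ₜ[R] ((e i k).right m ⊗ₜ[R] (q i).right k)) := by
  have : D3 (R := R) (A := A) = lTensor A (D2 (R := R)) ∘ₗ comul := by
    simp only [D3, D2, ← comp_assoc, ← lTensor_comp]
  rw [this]
  simp only [comp_apply, ← r.eq, map_sum, lTensor_tmul]
  refine Finset.sum_congr rfl fun i _ => ?_
  rw [D2_lc (r.right i) (q i) (e i), tmul_sum]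
  exact Finset.sum_congr rfl fun k _ => by rw [tmul_sum]

/-- tree ((1(23))4) -/
lemma D3_t3 (a : A) (r : Coalgebra.Repr R a (A × A)) (p : ∀ i, Coalgebra.Repr R (r.left i) (A × A))
    (t : ∀ i j, Coalgebra.Repr R ((p i).right j) (A × A)) :
    D3 (R := R) a = ∑ i ∈ r.index, ∑ j ∈ (p i).index, ∑ m ∈ (t i j).index,
      (p i).left j ⊗ₜ[R] ((t i j).left m ⊗ₜ[R] ((t i j).right m ⊗ₜ[R] r.right i)) := by
  -- apply M := lTensor A (assoc ∘ rTensor comul) to D2_lc / D2_rc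
  set M : A ⊗[R] (A ⊗[R] A) →ₗ[R] A ⊗[R] (A ⊗[R] (A ⊗[R] A)) :=
    lTensor A ((TensorProduct.assoc R A A A).toLinearMap ∘ₗ rTensor A comul) with hM
  have key : M (D2 (R := R) a) = D3 (R := R) a := by
    set q : ∀ i, Coalgebra.Repr R (r.right i) (A × A) := fun i => ℛ R (r.right i)
    set e : ∀ i k, Coalgebra.Repr R ((q i).left k) (A × A) := fun i k => ℛ R ((q i).left k)
    rw [D2_rc a r q, D3_t4 a r q e]
    simp only [map_sum, hM, lTensor_tmul, comp_apply, rTensor_tmul]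
    refine Finset.sum_congr rfl fun i _ => Finset.sum_congr rfl fun k _ => ?_
    rw [← (e i k).eq, sum_tmul, map_sum, tmul_sum]
    exact Finset.sum_congr rfl fun m _ => by simp
  rw [← key, D2_lc a r p]
  simp only [map_sum, hM, lTensor_tmul, comp_apply, rTensor_tmul]
  refine Finset.sum_congr rfl fun i _ => Finset.sum_congr rfl fun j _ => ?_
  rw [← (t i j).eq, sum_tmul, map_sum, tmul_sum]
  exact Finset.sum_congr rfl fun m _ => by simp


set_option linter.unusedSectionVars false
variable {R A : Type*} [CommRing R] [AddCommGroup A] [Module R A] [Coalgebra R A]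

def IsCocomm' : Prop := ∀ x : A, (TensorProduct.comm R A A) (comul x) = comul x

/-- swap the first two legs of a triple tensor -/
def sw3 : A ⊗[R] (A ⊗[R] A) →ₗ[R] A ⊗[R] (A ⊗[R] A) :=
  (TensorProduct.assoc R A A A).toLinearMap
    ∘ₗ rTensor A (TensorProduct.comm R A A).toLinearMap
    ∘ₗ (TensorProduct.assoc R A A A).symm.toLinearMap

@[simp] lemma sw3_tmul (x y z : A) :
    sw3 (R := R) (x ⊗ₜ (y ⊗ₜ z)) = y ⊗ₜ[R] (x ⊗ₜ[R] z) := by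
  simp [sw3]

lemma repr_swap (hco : IsCocomm' (R := R) (A := A)) (x : A) (r : Coalgebra.Repr R x (A × A)) :
    ∑ i ∈ r.index, r.right i ⊗ₜ[R] r.left i = comul x := by
  have := hco x
  rw [← r.eq] at this ⊢
  simpa [map_sum] using this

/-- tree ((12)(34)) with legs 2,3 exchanged, for cocommutative coalgebras -/
lemma D3_t2' (hco : IsCocomm' (R := R) (A := A)) (a : A) (r : Coalgebra.Repr R a (A × A))
    (p : ∀ i, Coalgebra.Repr R (r.left i) (A × A)) (q : ∀ i, Coalgebra.Repr R (r.right i) (A × A)) :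
    D3 (R := R) a = ∑ i ∈ r.index, ∑ j ∈ (p i).index, ∑ k ∈ (q i).index,
      (p i).left j ⊗ₜ[R] ((q i).left k ⊗ₜ[R] ((p i).right j ⊗ₜ[R] (q i).right k)) := by
  -- first: lTensor sw3 of D3 = D3  (cocommutativity of middle legs, via tree t4)
  have inv : lTensor A (sw3 (R := R)) (D3 (R := R) a) = D3 (R := R) a := by
    set q' : ∀ i, Coalgebra.Repr R (r.right i) (A × A) := fun i => ℛ R (r.right i)
    set e : ∀ i k, Coalgebra.Repr R ((q' i).left k) (A × A) := fun i k => ℛ R ((q' i).left k)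
    rw [D3_t4 a r q' e]
    simp only [map_sum, lTensor_tmul, sw3_tmul]
    refine Finset.sum_congr rfl fun i _ => Finset.sum_congr rfl fun k _ => ?_
    have h := repr_swap hco ((q' i).left k) (e i k)
    rw [← (e i k).eq] at h
    calc ∑ m ∈ (e i k).index,
          r.left i ⊗ₜ[R] ((e i k).right m ⊗ₜ[R] ((e i k).left m ⊗ₜ[R] (q' i).right k))
        = r.left i ⊗ₜ[R] (lTensor A ((TensorProduct.mk R A A).flip ((q' i).right k))
            (∑ m ∈ (e i k).index, (e i k).right m ⊗ₜ[R] (e i k).left m)) := by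
          rw [map_sum, tmul_sum]; simp [TensorProduct.mk]
      _ = r.left i ⊗ₜ[R] (lTensor A ((TensorProduct.mk R A A).flip ((q' i).right k))
            (∑ m ∈ (e i k).index, (e i k).left m ⊗ₜ[R] (e i k).right m)) := by rw [h]
      _ = _ := by rw [map_sum, tmul_sum]; simp [TensorProduct.mk]
  conv_lhs => rw [← inv, D3_t2 a r p q]
  simp only [map_sum, lTensor_tmul, sw3_tmul]

section conv
variable {B : Type*} [Ring B] [Algebra R B]

/-- convolution product on `Hom(A, B)` -/
def conv (f g : A →ₗ[R] B) : A →ₗ[R] B := mul' R B ∘ₗ map f g ∘ₗ comul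

lemma conv_repr (f g : A →ₗ[R] B) (a : A) (r : Coalgebra.Repr R a (A × A)) :
    conv f g a = ∑ i ∈ r.index, f (r.left i) * g (r.right i) := by
  simp only [conv, comp_apply, ← r.eq, map_sum, map_tmul, mul'_apply]

/-- the convolution unit -/
def cunit : A →ₗ[R] B := Algebra.linearMap R B ∘ₗ counit

lemma conv_cunit_left (f : A →ₗ[R] B) : conv (cunit (R := R)) f = f := by
  ext a
  set r := ℛ R a
  rw [conv_repr _ _ a r]
  calc ∑ i ∈ r.index, cunit (R := R) (r.left i) * f (r.right i)
      = ∑ i ∈ r.index, f (counit (R := R) (r.left i) • r.right i) := by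
        refine Finset.sum_congr rfl fun i _ => ?_
        simp [cunit, Algebra.smul_def]
    _ = f (∑ i ∈ r.index, counit (R := R) (r.left i) • r.right i) := by rw [map_sum]
    _ = f a := by
        congr 1
        have h := congrArg (TensorProduct.lid R A) (sum_counit_tmul_eq (R := R) r)
        rw [map_sum] at h
        simp only [TensorProduct.lid_tmul, one_smul] at h
        exact h

lemma conv_cunit_right (f : A →ₗ[R] B) : conv f (cunit (R := R)) = f := by
  ext a
  set r := ℛ R a
  rw [conv_repr _ _ a r]
  calc ∑ i ∈ r.index, f (r.left i) * cunit (R := R) (r.right i)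
      = ∑ i ∈ r.index, f (counit (R := R) (r.right i) • r.left i) := by
        refine Finset.sum_congr rfl fun i _ => ?_
        rw [map_smul]
        simp [cunit, Algebra.smul_def, Algebra.commutes]
    _ = f (∑ i ∈ r.index, counit (R := R) (r.right i) • r.left i) := by rw [map_sum]
    _ = f a := by
        congr 1
        have h := congrArg (TensorProduct.rid R A) (sum_tmul_counit_eq (R := R) r)
        rw [map_sum] at h
        simp only [TensorProduct.rid_tmul, one_smul] at h
        exact h

lemma conv_assoc (f g h : A →ₗ[R] B) : conv (conv f g) h = conv f (conv g h) := by
  ext a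
  set r := ℛ R a
  set p : ∀ i, Coalgebra.Repr R (r.left i) (A × A) := fun i => ℛ R (r.left i)
  set q : ∀ i, Coalgebra.Repr R (r.right i) (A × A) := fun i => ℛ R (r.right i)
  have lhs : conv (conv f g) h a
      = ∑ i ∈ r.index, ∑ j ∈ (p i).index,
          f ((p i).left j) * g ((p i).right j) * h (r.right i) := by
    rw [conv_repr _ _ a r]
    refine Finset.sum_congr rfl fun i _ => ?_
    rw [conv_repr f g _ (p i), Finset.sum_mul]
  have rhs : conv f (conv g h) a
      = ∑ i ∈ r.index, ∑ k ∈ (q i).index,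
          f (r.left i) * (g ((q i).left k) * h ((q i).right k)) := by
    rw [conv_repr _ _ a r]
    refine Finset.sum_congr rfl fun i _ => ?_
    rw [conv_repr g h _ (q i), Finset.mul_sum]
  rw [lhs, rhs]
  -- apply trilinear map to coassoc bridge
  set Φ : A ⊗[R] (A ⊗[R] A) →ₗ[R] B :=
    mul' R B ∘ₗ map f (mul' R B ∘ₗ map g h) with hΦ
  have bridge := sum_tmul_tmul_eq (R := R) r p q
  have := congrArg Φ bridge
  simpa [map_sum, hΦ, mul_assoc] using this

end conv

-- counit collapse helpers
lemma sum_counit_smul_left {a : A} (r : Coalgebra.Repr R a (A × A)) :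
    ∑ i ∈ r.index, counit (R := R) (r.right i) • r.left i = a := by
  have h := congrArg (TensorProduct.rid R A) (sum_tmul_counit_eq (R := R) r)
  rw [map_sum] at h
  simp only [TensorProduct.rid_tmul, one_smul] at h
  exact h

lemma sum_counit_smul_right {a : A} (r : Coalgebra.Repr R a (A × A)) :
    ∑ i ∈ r.index, counit (R := R) (r.left i) • r.right i = a := by
  have h := congrArg (TensorProduct.lid R A) (sum_counit_tmul_eq (R := R) r)
  rw [map_sum] at h
  simp only [TensorProduct.lid_tmul, one_smul] at h
  exact h

section hopf
variable {A' : Type*} [Ring A'] [HopfAlgebra R A']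

lemma counit_antipode (a : A') :
    counit (R := R) (antipode (R := R) a) = counit (R := R) a := by
  set r := ℛ R a
  have h2 := congrArg (counit (R := R) (A := A')) (sum_antipode_mul_eq_algebraMap_counit (R := R) r)
  rw [map_sum] at h2
  simp only [Bialgebra.counit_mul] at h2
  have h3 : counit (R := R) (algebraMap R A' (counit (R := R) a)) = counit (R := R) a := by
    rw [Algebra.algebraMap_eq_smul_one, map_smul, Bialgebra.counit_one, smul_eq_mul, mul_one]
  rw [h3] at h2
  calc counit (R := R) (antipode (R := R) a)
      = counit (R := R) (antipode (R := R)
          (∑ i ∈ r.index, counit (R := R) (r.right i) • r.left i)) := by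
        rw [sum_counit_smul_left r]
    _ = ∑ i ∈ r.index, counit (R := R) (antipode (R := R) (r.left i))
          * counit (R := R) (r.right i) := by
        rw [map_sum, map_sum]
        refine Finset.sum_congr rfl fun i _ => ?_
        rw [map_smul, map_smul, smul_eq_mul, mul_comm]
    _ = counit (R := R) a := h2

lemma comul_antipode :
    (comul (R := R) (A := A')) ∘ₗ antipode (R := R)
      = map (antipode (R := R)) (antipode (R := R))
          ∘ₗ (TensorProduct.comm R A' A').toLinearMap ∘ₗ comul := by
  set S : A' →ₗ[R] A' := antipode (R := R) with hS
  set D : A' →ₗ[R] A' ⊗[R] A' := comul with hD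
  set F : A' →ₗ[R] A' ⊗[R] A' := comul ∘ₗ S with hF
  set G : A' →ₗ[R] A' ⊗[R] A' :=
    map S S ∘ₗ (TensorProduct.comm R A' A').toLinearMap ∘ₗ comul with hG
  have hDF : conv D F = cunit (R := R) := by
    ext a
    set r := ℛ R a
    rw [conv_repr _ _ a r]
    calc ∑ i ∈ r.index, D (r.left i) * F (r.right i)
        = comul (R := R) (∑ i ∈ r.index, r.left i * S (r.right i)) := by
          rw [map_sum]
          exact Finset.sum_congr rfl fun i _ => by
            rw [Bialgebra.comul_mul]; rfl
      _ = cunit (R := R) a := by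
          rw [sum_mul_antipode_eq_algebraMap_counit (R := R) r, Algebra.algebraMap_eq_smul_one, map_smul,
            Bialgebra.comul_one]
          simp [cunit, Algebra.algebraMap_eq_smul_one]
  have hGD : conv G D = cunit (R := R) := by
    ext a
    set r := ℛ R a
    set p : ∀ i, Coalgebra.Repr R (r.left i) (A' × A') := fun i => ℛ R (r.left i)
    set t : ∀ i j, Coalgebra.Repr R ((p i).right j) (A' × A') := fun i j => ℛ R ((p i).right j)
    set m : A' ⊗[R] A' →ₗ[R] A' := mul' R A' ∘ₗ map S LinearMap.id with hm
    set Φ : A' ⊗[R] (A' ⊗[R] (A' ⊗[R] A')) →ₗ[R] A' ⊗[R] A' :=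
      map m m ∘ₗ (tensorTensorTensorComm R A' A' A' A').toLinearMap
        ∘ₗ rTensor (A' ⊗[R] A') (TensorProduct.comm R A' A').toLinearMap
        ∘ₗ (TensorProduct.assoc R A' A' (A' ⊗[R] A')).symm.toLinearMap with hΦ
    have hΦt : ∀ x₁ x₂ x₃ x₄ : A',
        Φ (x₁ ⊗ₜ (x₂ ⊗ₜ (x₃ ⊗ₜ x₄))) = (S x₂ * x₃) ⊗ₜ[R] (S x₁ * x₄) := by
      intro x₁ x₂ x₃ x₄
      simp [hΦ, hm, tensorTensorTensorComm_tmul]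
    have lhs : conv G D a
        = Φ (∑ i ∈ r.index, ∑ j ∈ (p i).index, ∑ k ∈ (ℛ R (r.right i)).index,
            (p i).left j ⊗ₜ[R] ((p i).right j ⊗ₜ[R]
              ((ℛ R (r.right i)).left k ⊗ₜ[R] (ℛ R (r.right i)).right k))) := by
      rw [conv_repr _ _ a r]
      rw [map_sum]
      refine Finset.sum_congr rfl fun i _ => ?_
      rw [map_sum]
      have hGl : G (r.left i) = ∑ j ∈ (p i).index, S ((p i).right j) ⊗ₜ[R] S ((p i).left j) := by
        simp only [hG, comp_apply, LinearEquiv.coe_coe, ← (p i).eq, map_sum,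
          TensorProduct.comm_tmul, map_tmul]
      have hDr : D (r.right i) = ∑ k ∈ (ℛ R (r.right i)).index,
          (ℛ R (r.right i)).left k ⊗ₜ[R] (ℛ R (r.right i)).right k := ((ℛ R (r.right i)).eq).symm
      rw [hGl, hDr, Finset.sum_mul]
      refine Finset.sum_congr rfl fun j _ => ?_
      rw [Finset.mul_sum, map_sum]
      refine Finset.sum_congr rfl fun k _ => ?_
      rw [hΦt, Algebra.TensorProduct.tmul_mul_tmul]
    rw [lhs, ← D3_t2 a r p (fun i => ℛ R (r.right i)), D3_t3 a r p t, map_sum]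
    calc ∑ i ∈ r.index, Φ (∑ j ∈ (p i).index, ∑ m' ∈ (t i j).index,
            (p i).left j ⊗ₜ[R] ((t i j).left m' ⊗ₜ[R] ((t i j).right m' ⊗ₜ[R] r.right i)))
        = ∑ i ∈ r.index, (1 : A') ⊗ₜ[R] (S (r.left i) * r.right i) := by
          refine Finset.sum_congr rfl fun i _ => ?_
          rw [map_sum]
          calc ∑ j ∈ (p i).index, Φ (∑ m' ∈ (t i j).index,
                  (p i).left j ⊗ₜ[R] ((t i j).left m' ⊗ₜ[R] ((t i j).right m' ⊗ₜ[R] r.right i)))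
              = ∑ j ∈ (p i).index, counit (R := R) ((p i).right j)
                  • ((1 : A') ⊗ₜ[R] (S ((p i).left j) * r.right i)) := by
                refine Finset.sum_congr rfl fun j _ => ?_
                rw [map_sum]
                calc ∑ m' ∈ (t i j).index, Φ ((p i).left j ⊗ₜ[R]
                        ((t i j).left m' ⊗ₜ[R] ((t i j).right m' ⊗ₜ[R] r.right i)))
                    = (∑ m' ∈ (t i j).index, S ((t i j).left m') * (t i j).right m')
                        ⊗ₜ[R] (S ((p i).left j) * r.right i) := by
                      rw [sum_tmul]
                      exact Finset.sum_congr rfl fun m' _ => hΦt _ _ _ _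
                  _ = _ := by
                      rw [sum_antipode_mul_eq_algebraMap_counit (R := R) (t i j),
                        Algebra.algebraMap_eq_smul_one, smul_tmul']
              _ = (1 : A') ⊗ₜ[R] (S (∑ j ∈ (p i).index,
                    counit (R := R) ((p i).right j) • (p i).left j) * r.right i) := by
                rw [map_sum, Finset.sum_mul, tmul_sum]
                exact Finset.sum_congr rfl fun j _ => by
                  rw [map_smul, smul_mul_assoc, tmul_smul]
              _ = (1 : A') ⊗ₜ[R] (S (r.left i) * r.right i) := by
                rw [sum_counit_smul_left (p i)]
      _ = cunit (R := R) a := by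
          rw [← tmul_sum, sum_antipode_mul_eq_algebraMap_counit (R := R) r]
          simp [cunit, Algebra.algebraMap_eq_smul_one, Algebra.TensorProduct.one_def]
  have : F = G := by
    calc F = conv (cunit (R := R)) F := (conv_cunit_left F).symm
      _ = conv (conv G D) F := by rw [hGD]
      _ = conv G (conv D F) := conv_assoc G D F
      _ = conv G (cunit (R := R)) := by rw [hDF]
      _ = G := conv_cunit_right G
  exact this

lemma comul_antipode_repr {ι : Type*} {z : A'} (rz : Coalgebra.Repr R z ι) :
    comul (R := R) (antipode (R := R) z)
      = ∑ i ∈ rz.index,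
          antipode (R := R) (rz.right i) ⊗ₜ[R] antipode (R := R) (rz.left i) := by
  have h := LinearMap.congr_fun (comul_antipode (R := R) (A' := A')) z
  simp only [comp_apply, LinearEquiv.coe_coe] at h
  rw [h, ← rz.eq, map_sum, map_sum]
  refine Finset.sum_congr rfl fun i _ => ?_
  simp

end hopf
end RBTool
end RBToolSec


-- ## Auxiliary lemmas for the descendent structure
noncomputable section Aux
namespace RBAux
open RBTool
variable {R H K : Type*} [CommRing R] [Ring H] [HopfAlgebra R H] [Ring K] [HopfAlgebra R K]
variable (act : H ⊗[R] K →ₗ[R] K) (T : K →ₗ[R] H)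

/-- `psi y (u ⊗ v) = u * (T v ⇀ y)`; `descProd (X ⊗ y) = psi y (comul X)`. -/
def psi (y : K) : K ⊗[R] K →ₗ[R] K :=
  mul' R K ∘ₗ map LinearMap.id (act ∘ₗ map T LinearMap.id)
    ∘ₗ (TensorProduct.assoc R K K K).toLinearMap
    ∘ₗ (mk R (K ⊗[R] K) K).flip y

@[simp] lemma psi_tmul (y u v : K) :
    psi act T y (u ⊗ₜ v) = u * act (T v ⊗ₜ y) := by
  simp [psi, mk_apply]

lemma descProd_psi (X y : K) :
    descProd R H K act T (X ⊗ₜ y) = psi act T y (comul (R := R) X) := by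
  simp [descProd, psi, mk_apply]

lemma descProd_repr {ι : Type*} (a b : K) (r : Coalgebra.Repr R a ι) :
    descProd R H K act T (a ⊗ₜ b)
      = ∑ i ∈ r.index, r.left i * act (T (r.right i) ⊗ₜ b) := by
  rw [descProd_psi, ← r.eq, map_sum]
  simp

/-- `theta (u ⊗ v) = S_H(T u) ⇀ S_K(v)`; `descAntipode X = theta (comul X)`. -/
def theta : K ⊗[R] K →ₗ[R] K :=
  act ∘ₗ map ((antipode (R := R) (A := H)) ∘ₗ T) (antipode (R := R) (A := K))

@[simp] lemma theta_tmul (u v : K) :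
    theta act T (u ⊗ₜ v)
      = act (antipode (R := R) (T u) ⊗ₜ antipode (R := R) v) := by
  simp [theta]

lemma descAntipode_theta (X : K) :
    descAntipode R H K act T X = theta act T (comul (R := R) X) := rfl

lemma descAntipode_repr {ι : Type*} (X : K) (r : Coalgebra.Repr R X ι) :
    descAntipode R H K act T X
      = ∑ i ∈ r.index,
          act (antipode (R := R) (T (r.left i)) ⊗ₜ antipode (R := R) (r.right i)) := by
  rw [descAntipode_theta, ← r.eq, map_sum]
  simp

lemma counit_T (hT : IsCoalgHom R H K T) (x : K) : counit (R := R) (T x) = counit (R := R) x :=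
  LinearMap.congr_fun hT.counit_comp x

/-- transport a representation along the coalgebra morphism `T` -/
def reprT {ι : Type*} (hT : IsCoalgHom R H K T) (x : K) (r : Coalgebra.Repr R x ι) : Coalgebra.Repr R (T x) ι where
  index := r.index
  left i := T (r.left i)
  right i := T (r.right i)
  eq := by
    have h := LinearMap.congr_fun hT.comul_comp x
    simp only [comp_apply] at h
    rw [h, ← r.eq, map_sum]
    simp

/-- the trivial representation of `comul 1` -/
def rone : Coalgebra.Repr R (1 : K) ℕ where
  index := {0}
  left _ := 1
  right _ := 1
  eq := by simp [Bialgebra.comul_one, Algebra.TensorProduct.one_def]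

lemma T_one (hT : IsCoalgHom R H K T) (hmb : IsModuleBialgebra R H K act)
    (hrb : IsRelRotaBaxter R H K act T) : T (1 : K) = 1 := by
  have hcom : comul (R := R) (T (1 : K)) = T 1 ⊗ₜ[R] T 1 := by
    have h := LinearMap.congr_fun hT.comul_comp (1 : K)
    simpa [Bialgebra.comul_one, Algebra.TensorProduct.one_def] using h
  have hcou : counit (R := R) (T (1 : K)) = 1 := by
    rw [counit_T T hT]; exact Bialgebra.counit_one
  have hsq : T 1 * T 1 = T 1 := by
    rw [hrb 1 1]
    congr 1
    rw [descProd_repr act T _ _ rone]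
    show ∑ _i ∈ ({0} : Finset ℕ), (1 : K) * act (T (1 : K) ⊗ₜ (1 : K)) = 1
    rw [Finset.sum_singleton, hmb.act_one, hcou, one_mul, one_smul]
  have hinv : antipode (R := R) (T (1 : K)) * T 1 = 1 := by
    have h : ∑ _i ∈ ({0} : Finset ℕ), antipode (R := R) (T (1 : K)) * T 1
        = algebraMap R H (counit (R := R) (T (1 : K))) :=
      sum_antipode_mul_eq_algebraMap_counit (R := R) (reprT T hT 1 rone)
    rw [Finset.sum_singleton, hcou] at h
    simp only [map_one] at h
    exact h

  calc T (1 : K) = 1 * T 1 := (one_mul _).symm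
    _ = antipode (R := R) (T (1 : K)) * T 1 * T 1 := by rw [hinv]
    _ = antipode (R := R) (T (1 : K)) * (T 1 * T 1) := mul_assoc _ _ _
    _ = antipode (R := R) (T (1 : K)) * T 1 := by rw [hsq]
    _ = 1 := hinv

lemma right_unit (hT : IsCoalgHom R H K T) (hmb : IsModuleBialgebra R H K act) (a : K) : descProd R H K act T (a ⊗ₜ (1 : K)) = a := by
  set r := ℛ R a
  rw [descProd_repr act T _ _ r]
  calc ∑ i ∈ r.index, r.left i * act (T (r.right i) ⊗ₜ (1 : K))
      = ∑ i ∈ r.index, counit (R := R) (r.right i) • r.left i := by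
        refine Finset.sum_congr rfl fun i _ => ?_
        rw [hmb.act_one, counit_T T hT]
        rw [mul_smul_comm, mul_one]
    _ = a := sum_counit_smul_left r

lemma left_unit (hT : IsCoalgHom R H K T) (hmb : IsModuleBialgebra R H K act)
    (hrb : IsRelRotaBaxter R H K act T) (a : K) :
    descProd R H K act T ((1 : K) ⊗ₜ a) = a := by
  rw [descProd_repr act T _ _ rone]
  show ∑ _i ∈ ({0} : Finset ℕ), (1 : K) * act (T (1 : K) ⊗ₜ a) = a
  rw [Finset.sum_singleton, T_one act T hT hmb hrb, hmb.one_act, one_mul]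

lemma counit_hom (hT : IsCoalgHom R H K T) (hmb : IsModuleBialgebra R H K act) :
    (counit (R := R)) ∘ₗ descProd R H K act T
      = (counit (R := R) (A := K ⊗[R] K)) := by
  apply TensorProduct.ext'
  intro a b
  set r := ℛ R a
  have hrhs : counit (R := R) (A := K ⊗[R] K) (a ⊗ₜ b)
      = counit (R := R) a * counit (R := R) b := by
    simp [TensorProduct.counit_tmul, mul_comm]
  rw [comp_apply, hrhs, descProd_repr act T _ _ r, map_sum]
  have hε : ∀ i, counit (R := R) (r.left i * act (T (r.right i) ⊗ₜ b))
      = counit (R := R) (r.left i) * (counit (R := R) (r.right i) * counit (R := R) b) := by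
    intro i
    rw [Bialgebra.counit_mul]
    have h := LinearMap.congr_fun hmb.counit_act (T (r.right i) ⊗ₜ b)
    simp only [comp_apply] at h
    rw [h]
    simp [TensorProduct.counit_tmul, counit_T T hT, mul_comm]
  calc ∑ i ∈ r.index, counit (R := R) (r.left i * act (T (r.right i) ⊗ₜ b))
      = (∑ i ∈ r.index, counit (R := R) (r.left i) * counit (R := R) (r.right i))
          * counit (R := R) b := by
        rw [Finset.sum_mul]
        exact Finset.sum_congr rfl fun i _ => by rw [hε i, mul_assoc]
    _ = _ := by
        congr 1
        have h := congrArg (counit (R := R) (A := K)) (sum_counit_smul_right r)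
        rw [map_sum] at h
        simpa [smul_eq_mul] using h

lemma comul_hom (hT : IsCoalgHom R H K T) (hmb : IsModuleBialgebra R H K act)
    (hco : _root_.IsCocomm R K) :
    (comul (R := R)) ∘ₗ descProd R H K act T
      = map (descProd R H K act T) (descProd R H K act T)
          ∘ₗ (comul (R := R) (A := K ⊗[R] K)) := by
  have hco' : RBTool.IsCocomm' (R := R) (A := K) := hco
  apply TensorProduct.ext'
  intro a b
  simp only [comp_apply]
  set r := ℛ R a with hr
  set p : ∀ i, Coalgebra.Repr R (r.left i) (K × K) := fun i => ℛ R (r.left i) with hp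
  set q : ∀ i, Coalgebra.Repr R (r.right i) (K × K) := fun i => ℛ R (r.right i) with hq
  set s := ℛ R b with hs
  set m1 : K → (K ⊗[R] K →ₗ[R] K) := fun y =>
    mul' R K ∘ₗ lTensor K (act ∘ₗ (mk R H K).flip y ∘ₗ T) with hm1
  have hm1t : ∀ y x₁ x₂ : K, m1 y (x₁ ⊗ₜ x₂) = x₁ * act (T x₂ ⊗ₜ y) := by
    intro y x₁ x₂; simp [hm1, mk_apply]
  set Φu : s.ι → (K ⊗[R] (K ⊗[R] (K ⊗[R] K)) →ₗ[R] K ⊗[R] K) := fun u =>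
    map (m1 (s.left u)) (m1 (s.right u))
      ∘ₗ (TensorProduct.assoc R K K (K ⊗[R] K)).symm.toLinearMap with hΦu
  set Φ : K ⊗[R] (K ⊗[R] (K ⊗[R] K)) →ₗ[R] K ⊗[R] K :=
    ∑ u ∈ s.index, Φu u with hΦ
  have hΦt : ∀ x₁ x₂ x₃ x₄ : K,
      Φ (x₁ ⊗ₜ (x₂ ⊗ₜ (x₃ ⊗ₜ x₄)))
        = ∑ u ∈ s.index,
            (x₁ * act (T x₂ ⊗ₜ s.left u)) ⊗ₜ[R] (x₃ * act (T x₄ ⊗ₜ s.right u)) := by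
    intro x₁ x₂ x₃ x₄
    rw [hΦ, LinearMap.sum_apply]
    refine Finset.sum_congr rfl fun u _ => ?_
    simp [hΦu, hm1t]
  have key : (∑ i ∈ r.index, ∑ j ∈ (p i).index, ∑ k ∈ (q i).index,
        (p i).left j ⊗ₜ[R] ((q i).left k ⊗ₜ[R] ((p i).right j ⊗ₜ[R] (q i).right k)))
      = ∑ i ∈ r.index, ∑ j ∈ (p i).index, ∑ k ∈ (q i).index,
        (p i).left j ⊗ₜ[R] ((p i).right j ⊗ₜ[R] ((q i).left k ⊗ₜ[R] (q i).right k)) :=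
    (RBTool.D3_t2' hco' a r p q).symm.trans (RBTool.D3_t2 a r p q)
  have claim1 : comul (R := R) (descProd R H K act T (a ⊗ₜ b))
      = Φ (∑ i ∈ r.index, ∑ j ∈ (p i).index, ∑ k ∈ (q i).index,
          (p i).left j ⊗ₜ[R] ((q i).left k ⊗ₜ[R] ((p i).right j ⊗ₜ[R] (q i).right k))) := by
    rw [descProd_repr act T _ _ r, map_sum, map_sum]
    refine Finset.sum_congr rfl fun i _ => ?_
    have hact : comul (R := R) (act (T (r.right i) ⊗ₜ b))
        = ∑ k ∈ (q i).index, ∑ u ∈ s.index,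
            act (T ((q i).left k) ⊗ₜ s.left u) ⊗ₜ[R] act (T ((q i).right k) ⊗ₜ s.right u) := by
      have h := LinearMap.congr_fun hmb.comul_act (T (r.right i) ⊗ₜ b)
      simp only [comp_apply] at h
      rw [h]
      have hHK : comul (R := R) (A := H ⊗[R] K) (T (r.right i) ⊗ₜ b)
          = ∑ k ∈ (q i).index, ∑ u ∈ s.index,
              (T ((q i).left k) ⊗ₜ[R] s.left u) ⊗ₜ[R] (T ((q i).right k) ⊗ₜ[R] s.right u) := by
        rw [TensorProduct.comul_tmul]
        rw [← (reprT T hT _ (q i)).eq, ← s.eq, sum_tmul, map_sum]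
        refine Finset.sum_congr rfl fun k _ => ?_
        rw [tmul_sum, map_sum]
        refine Finset.sum_congr rfl fun u _ => ?_
        simp [reprT, tensorTensorTensorComm_tmul]
      rw [hHK, map_sum]
      refine Finset.sum_congr rfl fun k _ => ?_
      rw [map_sum]
      exact Finset.sum_congr rfl fun u _ => by simp
    rw [Bialgebra.comul_mul, ← (p i).eq, hact, Finset.sum_mul, map_sum]
    refine Finset.sum_congr rfl fun j _ => ?_
    rw [Finset.mul_sum, map_sum]
    refine Finset.sum_congr rfl fun k _ => ?_
    rw [Finset.mul_sum, hΦt]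
    exact Finset.sum_congr rfl fun u _ => by rw [Algebra.TensorProduct.tmul_mul_tmul]
  have claim2 : map (descProd R H K act T) (descProd R H K act T)
        (comul (R := R) (A := K ⊗[R] K) (a ⊗ₜ b))
      = Φ (∑ i ∈ r.index, ∑ j ∈ (p i).index, ∑ k ∈ (q i).index,
          (p i).left j ⊗ₜ[R] ((p i).right j ⊗ₜ[R] ((q i).left k ⊗ₜ[R] (q i).right k))) := by
    have hKK : comul (R := R) (A := K ⊗[R] K) (a ⊗ₜ b)
        = ∑ i ∈ r.index, ∑ u ∈ s.index,
            (r.left i ⊗ₜ[R] s.left u) ⊗ₜ[R] (r.right i ⊗ₜ[R] s.right u) := by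
      rw [TensorProduct.comul_tmul]
      rw [← r.eq, ← s.eq, sum_tmul, map_sum]
      refine Finset.sum_congr rfl fun i _ => ?_
      rw [tmul_sum, map_sum]
      refine Finset.sum_congr rfl fun u _ => ?_
      simp [tensorTensorTensorComm_tmul]
    rw [hKK, map_sum, map_sum]
    refine Finset.sum_congr rfl fun i _ => ?_
    rw [map_sum]
    calc ∑ u ∈ s.index, map (descProd R H K act T) (descProd R H K act T)
            ((r.left i ⊗ₜ[R] s.left u) ⊗ₜ[R] (r.right i ⊗ₜ[R] s.right u))
        = ∑ u ∈ s.index, ∑ j ∈ (p i).index, ∑ k ∈ (q i).index,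
            ((p i).left j * act (T ((p i).right j) ⊗ₜ s.left u))
              ⊗ₜ[R] ((q i).left k * act (T ((q i).right k) ⊗ₜ s.right u)) := by
          refine Finset.sum_congr rfl fun u _ => ?_
          rw [map_tmul, descProd_repr act T _ _ (p i), descProd_repr act T _ _ (q i),
            sum_tmul]
          exact Finset.sum_congr rfl fun j _ => by rw [tmul_sum]
      _ = ∑ j ∈ (p i).index, ∑ u ∈ s.index, ∑ k ∈ (q i).index, _ := Finset.sum_comm
      _ = ∑ j ∈ (p i).index, ∑ k ∈ (q i).index, ∑ u ∈ s.index,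
            ((p i).left j * act (T ((p i).right j) ⊗ₜ s.left u))
              ⊗ₜ[R] ((q i).left k * act (T ((q i).right k) ⊗ₜ s.right u)) :=
          Finset.sum_congr rfl fun j _ => Finset.sum_comm
      _ = ∑ j ∈ (p i).index, ∑ k ∈ (q i).index,
            Φ ((p i).left j ⊗ₜ[R] ((p i).right j ⊗ₜ[R] ((q i).left k ⊗ₜ[R] (q i).right k))) :=
          Finset.sum_congr rfl fun j _ => Finset.sum_congr rfl fun k _ => (hΦt _ _ _ _).symm
      _ = Φ (∑ j ∈ (p i).index, ∑ k ∈ (q i).index,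
            (p i).left j ⊗ₜ[R] ((p i).right j ⊗ₜ[R] ((q i).left k ⊗ₜ[R] (q i).right k))) := by
          rw [map_sum]
          exact Finset.sum_congr rfl fun j _ => by rw [map_sum]
  rw [claim1, key, claim2]

lemma comul_KK (a b : K) (r : Coalgebra.Repr R a (K × K)) (s : Coalgebra.Repr R b (K × K)) :
    comul (R := R) (A := K ⊗[R] K) (a ⊗ₜ b)
      = ∑ i ∈ r.index, ∑ u ∈ s.index,
          (r.left i ⊗ₜ[R] s.left u) ⊗ₜ[R] (r.right i ⊗ₜ[R] s.right u) := by
  rw [TensorProduct.comul_tmul]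
  rw [← r.eq, ← s.eq, sum_tmul, map_sum]
  refine Finset.sum_congr rfl fun i _ => ?_
  rw [tmul_sum, map_sum]
  refine Finset.sum_congr rfl fun u _ => ?_
  simp [tensorTensorTensorComm_tmul]

lemma assoc_desc (hT : IsCoalgHom R H K T) (hmb : IsModuleBialgebra R H K act)
    (hrb : IsRelRotaBaxter R H K act T) (hco : _root_.IsCocomm R K) (a b c : K) :
    descProd R H K act T (descProd R H K act T (a ⊗ₜ b) ⊗ₜ c)
      = descProd R H K act T (a ⊗ₜ descProd R H K act T (b ⊗ₜ c)) := by
  set r := ℛ R a with hr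
  set p : ∀ i, Coalgebra.Repr R (r.left i) (K × K) := fun i => ℛ R (r.left i) with hp
  set q : ∀ i, Coalgebra.Repr R (r.right i) (K × K) := fun i => ℛ R (r.right i) with hq
  set s := ℛ R b with hs
  set fu : s.ι → (K →ₗ[R] K) := fun u =>
    act ∘ₗ (mk R H K).flip (s.left u) ∘ₗ T with hfu
  set gu : s.ι → (K →ₗ[R] K) := fun u =>
    act ∘ₗ (mk R H K).flip (act (T (s.right u) ⊗ₜ c)) ∘ₗ T with hgu
  set Φu : s.ι → (K ⊗[R] (K ⊗[R] K) →ₗ[R] K) := fun u =>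
    mul' R K ∘ₗ map LinearMap.id (mul' R K ∘ₗ map (fu u) (gu u)) with hΦu
  set Φ : K ⊗[R] (K ⊗[R] K) →ₗ[R] K := ∑ u ∈ s.index, Φu u with hΦ
  have hΦt : ∀ x₁ x₂ x₃ : K,
      Φ (x₁ ⊗ₜ (x₂ ⊗ₜ x₃))
        = ∑ u ∈ s.index,
            x₁ * (act (T x₂ ⊗ₜ s.left u)
              * act (T x₃ ⊗ₜ act (T (s.right u) ⊗ₜ c))) := by
    intro x₁ x₂ x₃
    rw [hΦ, LinearMap.sum_apply]
    refine Finset.sum_congr rfl fun u _ => ?_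
    simp [hΦu, hfu, hgu, mk_apply]
  have claimL : descProd R H K act T (descProd R H K act T (a ⊗ₜ b) ⊗ₜ c)
      = Φ (∑ i ∈ r.index, ∑ j ∈ (p i).index,
          (p i).left j ⊗ₜ[R] ((p i).right j ⊗ₜ[R] r.right i)) := by
    have hX : comul (R := R) (descProd R H K act T (a ⊗ₜ b))
        = ∑ i ∈ r.index, ∑ u ∈ s.index,
            descProd R H K act T (r.left i ⊗ₜ s.left u)
              ⊗ₜ[R] descProd R H K act T (r.right i ⊗ₜ s.right u) := by
      have h := LinearMap.congr_fun (comul_hom act T hT hmb hco) (a ⊗ₜ b)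
      simp only [comp_apply] at h
      rw [h, comul_KK a b r s, map_sum]
      refine Finset.sum_congr rfl fun i _ => ?_
      rw [map_sum]
      exact Finset.sum_congr rfl fun u _ => by rw [map_tmul]
    rw [descProd_psi, hX, map_sum]
    calc ∑ i ∈ r.index, psi act T c (∑ u ∈ s.index,
            descProd R H K act T (r.left i ⊗ₜ s.left u)
              ⊗ₜ[R] descProd R H K act T (r.right i ⊗ₜ s.right u))
        = ∑ i ∈ r.index, ∑ u ∈ s.index, ∑ j ∈ (p i).index,
            ((p i).left j * act (T ((p i).right j) ⊗ₜ s.left u))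
              * act (T (r.right i) ⊗ₜ act (T (s.right u) ⊗ₜ c)) := by
          refine Finset.sum_congr rfl fun i _ => ?_
          rw [map_sum]
          refine Finset.sum_congr rfl fun u _ => ?_
          rw [psi_tmul, ← hrb (r.right i) (s.right u), hmb.mul_act,
            descProd_repr act T _ _ (p i), Finset.sum_mul]
      _ = ∑ i ∈ r.index, ∑ j ∈ (p i).index, ∑ u ∈ s.index,
            ((p i).left j * act (T ((p i).right j) ⊗ₜ s.left u))
              * act (T (r.right i) ⊗ₜ act (T (s.right u) ⊗ₜ c)) :=
          Finset.sum_congr rfl fun i _ => Finset.sum_comm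
      _ = _ := by
          rw [map_sum]
          refine Finset.sum_congr rfl fun i _ => ?_
          rw [map_sum]
          refine Finset.sum_congr rfl fun j _ => ?_
          rw [hΦt]
          exact Finset.sum_congr rfl fun u _ => by rw [mul_assoc]
  have claimR : descProd R H K act T (a ⊗ₜ descProd R H K act T (b ⊗ₜ c))
      = Φ (∑ i ∈ r.index, ∑ k ∈ (q i).index,
          r.left i ⊗ₜ[R] ((q i).left k ⊗ₜ[R] (q i).right k)) := by
    rw [descProd_repr act T _ _ r]
    calc ∑ i ∈ r.index, r.left i * act (T (r.right i) ⊗ₜ descProd R H K act T (b ⊗ₜ c))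
        = ∑ i ∈ r.index, ∑ u ∈ s.index, ∑ k ∈ (q i).index,
            r.left i * (act (T ((q i).left k) ⊗ₜ s.left u)
              * act (T ((q i).right k) ⊗ₜ act (T (s.right u) ⊗ₜ c))) := by
          refine Finset.sum_congr rfl fun i _ => ?_
          rw [descProd_repr act T _ _ s]
          rw [show T (r.right i) ⊗ₜ[R] (∑ u ∈ s.index,
                s.left u * act (T (s.right u) ⊗ₜ c))
              = ∑ u ∈ s.index, T (r.right i) ⊗ₜ[R] (s.left u * act (T (s.right u) ⊗ₜ c))
            from tmul_sum _ _ _, map_sum, Finset.mul_sum]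
          refine Finset.sum_congr rfl fun u _ => ?_
          rw [hmb.act_mul, ← (reprT T hT _ (q i)).eq, map_sum, map_sum, Finset.mul_sum]
          refine Finset.sum_congr rfl fun k _ => ?_
          simp [reprT, mk_apply]
      _ = ∑ i ∈ r.index, ∑ k ∈ (q i).index, ∑ u ∈ s.index,
            r.left i * (act (T ((q i).left k) ⊗ₜ s.left u)
              * act (T ((q i).right k) ⊗ₜ act (T (s.right u) ⊗ₜ c))) :=
          Finset.sum_congr rfl fun i _ => Finset.sum_comm
      _ = _ := by
          rw [map_sum]
          refine Finset.sum_congr rfl fun i _ => ?_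
          rw [map_sum]
          exact Finset.sum_congr rfl fun k _ => (hΦt _ _ _).symm
  rw [claimL, claimR, sum_tmul_tmul_eq r p q]

lemma right_antipode (hT : IsCoalgHom R H K T) (hmb : IsModuleBialgebra R H K act)
    (a : K) :
    descProd R H K act T
        (map LinearMap.id (descAntipode R H K act T) (comul (R := R) a))
      = counit (R := R) a • (1 : K) := by
  set r := ℛ R a with hr
  set p : ∀ i, Coalgebra.Repr R (r.left i) (K × K) := fun i => ℛ R (r.left i) with hp
  set q : ∀ i, Coalgebra.Repr R (r.right i) (K × K) := fun i => ℛ R (r.right i) with hq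
  set e : ∀ i k, Coalgebra.Repr R ((q i).left k) (K × K) := fun i k => ℛ R ((q i).left k) with he
  set Φ : K ⊗[R] (K ⊗[R] (K ⊗[R] K)) →ₗ[R] K :=
    mul' R K ∘ₗ lTensor K (act
      ∘ₗ map (mul' R H ∘ₗ map T ((antipode (R := R) (A := H)) ∘ₗ T))
          (antipode (R := R) (A := K))
      ∘ₗ (TensorProduct.assoc R K K K).symm.toLinearMap) with hΦ
  have hΦt : ∀ x₁ x₂ x₃ x₄ : K,
      Φ (x₁ ⊗ₜ (x₂ ⊗ₜ (x₃ ⊗ₜ x₄)))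
        = x₁ * act ((T x₂ * antipode (R := R) (T x₃)) ⊗ₜ antipode (R := R) x₄) := by
    intro x₁ x₂ x₃ x₄
    simp [hΦ]
  have claim1 : descProd R H K act T
        (map LinearMap.id (descAntipode R H K act T) (comul (R := R) a))
      = Φ (∑ i ∈ r.index, ∑ j ∈ (p i).index, ∑ k ∈ (q i).index,
          (p i).left j ⊗ₜ[R] ((p i).right j ⊗ₜ[R] ((q i).left k ⊗ₜ[R] (q i).right k))) := by
    rw [← r.eq, map_sum, map_sum]
    calc ∑ i ∈ r.index, descProd R H K act T
            (map LinearMap.id (descAntipode R H K act T) (r.left i ⊗ₜ r.right i))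
        = ∑ i ∈ r.index, ∑ j ∈ (p i).index, ∑ k ∈ (q i).index,
            (p i).left j * act ((T ((p i).right j)
              * antipode (R := R) (T ((q i).left k))) ⊗ₜ antipode (R := R) ((q i).right k)) := by
          refine Finset.sum_congr rfl fun i _ => ?_
          rw [map_tmul, LinearMap.id_coe, id_eq, descProd_repr act T _ _ (p i)]
          refine Finset.sum_congr rfl fun j _ => ?_
          rw [descAntipode_repr act T _ (q i), tmul_sum, map_sum, Finset.mul_sum]
          refine Finset.sum_congr rfl fun k _ => ?_
          rw [← hmb.mul_act]
      _ = _ := by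
          rw [map_sum]
          refine Finset.sum_congr rfl fun i _ => ?_
          rw [map_sum]
          refine Finset.sum_congr rfl fun j _ => ?_
          rw [map_sum]
          exact Finset.sum_congr rfl fun k _ => (hΦt _ _ _ _).symm
  rw [claim1, ← RBTool.D3_t2 a r p q, RBTool.D3_t4 a r q e, map_sum]
  calc ∑ i ∈ r.index, Φ (∑ k ∈ (q i).index, ∑ m ∈ (e i k).index,
          r.left i ⊗ₜ[R] ((e i k).left m ⊗ₜ[R] ((e i k).right m ⊗ₜ[R] (q i).right k)))
      = ∑ i ∈ r.index, r.left i * antipode (R := R) (r.right i) := by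
        refine Finset.sum_congr rfl fun i _ => ?_
        rw [map_sum]
        calc ∑ k ∈ (q i).index, Φ (∑ m ∈ (e i k).index,
                r.left i ⊗ₜ[R] ((e i k).left m ⊗ₜ[R] ((e i k).right m ⊗ₜ[R] (q i).right k)))
            = ∑ k ∈ (q i).index, counit (R := R) ((q i).left k)
                • (r.left i * antipode (R := R) ((q i).right k)) := by
              refine Finset.sum_congr rfl fun k _ => ?_
              rw [map_sum]
              calc ∑ m ∈ (e i k).index, Φ (r.left i ⊗ₜ[R]
                      ((e i k).left m ⊗ₜ[R] ((e i k).right m ⊗ₜ[R] (q i).right k)))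
                  = r.left i * act ((∑ m ∈ (e i k).index,
                      T ((e i k).left m) * antipode (R := R) (T ((e i k).right m)))
                        ⊗ₜ antipode (R := R) ((q i).right k)) := by
                    rw [sum_tmul, map_sum, Finset.mul_sum]
                    exact Finset.sum_congr rfl fun m _ => hΦt _ _ _ _
                _ = counit (R := R) ((q i).left k)
                      • (r.left i * antipode (R := R) ((q i).right k)) := by
                    have hsum : ∑ m ∈ (e i k).index,
                        T ((e i k).left m) * antipode (R := R) (T ((e i k).right m))
                        = algebraMap R H (counit (R := R) ((q i).left k)) := by
                      have h := sum_mul_antipode_eq_algebraMap_counit (R := R) (reprT T hT _ (e i k))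
                      rw [counit_T T hT] at h
                      exact h
                    rw [hsum, Algebra.algebraMap_eq_smul_one, ← smul_tmul', map_smul,
                      hmb.one_act, mul_smul_comm]
          _ = r.left i * antipode (R := R)
                (∑ k ∈ (q i).index, counit (R := R) ((q i).left k) • (q i).right k) := by
              rw [map_sum, Finset.mul_sum]
              exact Finset.sum_congr rfl fun k _ => by
                rw [map_smul, mul_smul_comm]
          _ = r.left i * antipode (R := R) (r.right i) :=
              congrArg (fun z => r.left i * antipode (R := R) z)
                (sum_counit_smul_right (q i))
    _ = counit (R := R) a • (1 : K) := sum_mul_antipode_eq_smul r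

lemma T_ST (hT : IsCoalgHom R H K T) (hmb : IsModuleBialgebra R H K act)
    (hrb : IsRelRotaBaxter R H K act T) :
    T ∘ₗ descAntipode R H K act T = (antipode (R := R) (A := H)) ∘ₗ T := by
  have c1 : RBTool.conv ((antipode (R := R) (A := H)) ∘ₗ T) T
      = RBTool.cunit (R := R) := by
    ext x
    set r := ℛ R x
    rw [RBTool.conv_repr _ _ x r]
    have h := sum_antipode_mul_eq_algebraMap_counit (R := R) (reprT T hT x r)
    rw [counit_T T hT] at h
    exact h.trans rfl
  have c2 : RBTool.conv T (T ∘ₗ descAntipode R H K act T)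
      = RBTool.cunit (R := R) := by
    ext x
    set r := ℛ R x
    rw [RBTool.conv_repr _ _ x r]
    calc ∑ i ∈ r.index, T (r.left i) * (T ∘ₗ descAntipode R H K act T) (r.right i)
        = T (∑ i ∈ r.index,
            descProd R H K act T (r.left i ⊗ₜ descAntipode R H K act T (r.right i))) := by
          rw [map_sum]
          exact Finset.sum_congr rfl fun i _ => hrb _ _
      _ = T (descProd R H K act T
            (map LinearMap.id (descAntipode R H K act T) (comul (R := R) x))) := by
          congr 1
          rw [← r.eq, map_sum, map_sum]
          exact Finset.sum_congr rfl fun i _ => by rw [map_tmul]; rfl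
      _ = RBTool.cunit (R := R) x := by
          rw [right_antipode act T hT hmb x, map_smul, T_one act T hT hmb hrb]
          simp [RBTool.cunit, Algebra.algebraMap_eq_smul_one]
  calc T ∘ₗ descAntipode R H K act T
      = RBTool.conv (RBTool.cunit (R := R)) (T ∘ₗ descAntipode R H K act T) :=
        (RBTool.conv_cunit_left _).symm
    _ = RBTool.conv (RBTool.conv ((antipode (R := R) (A := H)) ∘ₗ T) T)
          (T ∘ₗ descAntipode R H K act T) := by rw [c1]
    _ = RBTool.conv ((antipode (R := R) (A := H)) ∘ₗ T)
          (RBTool.conv T (T ∘ₗ descAntipode R H K act T)) := RBTool.conv_assoc _ _ _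
    _ = RBTool.conv ((antipode (R := R) (A := H)) ∘ₗ T) (RBTool.cunit (R := R)) := by
        rw [c2]
    _ = (antipode (R := R) (A := H)) ∘ₗ T := RBTool.conv_cunit_right _

lemma left_antipode (hT : IsCoalgHom R H K T) (hmb : IsModuleBialgebra R H K act)
    (hrb : IsRelRotaBaxter R H K act T) (hco : _root_.IsCocomm R K) (a : K) :
    descProd R H K act T
        (map (descAntipode R H K act T) LinearMap.id (comul (R := R) a))
      = counit (R := R) a • (1 : K) := by
  have hco' : RBTool.IsCocomm' (R := R) (A := K) := hco
  have hTST : ∀ x : K, T (descAntipode R H K act T x) = antipode (R := R) (T x) :=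
    fun x => LinearMap.congr_fun (T_ST act T hT hmb hrb) x
  set r := ℛ R a with hr
  set w : ∀ i, Coalgebra.Repr R (r.left i) (K × K) := fun i => ℛ R (r.left i) with hw
  set q : ∀ i, Coalgebra.Repr R (r.right i) (K × K) := fun i => ℛ R (r.right i) with hq
  set g : ∀ i j, Coalgebra.Repr R ((w i).left j) (K × K) := fun i j => ℛ R ((w i).left j) with hg
  set h : ∀ i j, Coalgebra.Repr R ((w i).right j) (K × K) := fun i j => ℛ R ((w i).right j) with hh
  set Φ : r.ι → (K ⊗[R] (K ⊗[R] (K ⊗[R] K)) →ₗ[R] K) := fun i =>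
    mul' R K ∘ₗ map (theta act T)
        (act ∘ₗ (mk R H K).flip (r.right i) ∘ₗ T ∘ₗ theta act T)
      ∘ₗ (TensorProduct.comm R (K ⊗[R] K) (K ⊗[R] K)).toLinearMap
      ∘ₗ (tensorTensorTensorComm R K K K K).toLinearMap
      ∘ₗ (TensorProduct.assoc R K K (K ⊗[R] K)).symm.toLinearMap with hΦ
  have hΦt : ∀ (i : r.ι) (x₁ x₂ x₃ x₄ : K),
      Φ i (x₁ ⊗ₜ (x₂ ⊗ₜ (x₃ ⊗ₜ x₄)))
        = act (antipode (R := R) (T x₂) ⊗ₜ antipode (R := R) x₄)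
            * act (T (act (antipode (R := R) (T x₁) ⊗ₜ antipode (R := R) x₃))
                ⊗ₜ r.right i) := by
    intro i x₁ x₂ x₃ x₄
    simp [hΦ, tensorTensorTensorComm_tmul, mk_apply]
  set Ψ : K ⊗[R] (K ⊗[R] (K ⊗[R] K)) →ₗ[R] K :=
    mul' R K ∘ₗ map (theta act T)
        (act ∘ₗ map ((antipode (R := R) (A := H)) ∘ₗ T) LinearMap.id)
      ∘ₗ (tensorTensorTensorComm R K K K K).toLinearMap
      ∘ₗ rTensor (K ⊗[R] K) (TensorProduct.comm R K K).toLinearMap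
      ∘ₗ (TensorProduct.assoc R K K (K ⊗[R] K)).symm.toLinearMap with hΨ
  have hΨt : ∀ x₁ x₂ x₃ x₄ : K,
      Ψ (x₁ ⊗ₜ (x₂ ⊗ₜ (x₃ ⊗ₜ x₄)))
        = act (antipode (R := R) (T x₂) ⊗ₜ antipode (R := R) x₃)
            * act (antipode (R := R) (T x₁) ⊗ₜ x₄) := by
    intro x₁ x₂ x₃ x₄
    simp [hΨ, tensorTensorTensorComm_tmul]
  -- Step 1: expand the left-hand side
  have claimA : descProd R H K act T
        (map (descAntipode R H K act T) LinearMap.id (comul (R := R) a))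
      = ∑ i ∈ r.index, Φ i (∑ j ∈ (w i).index, ∑ m ∈ (g i j).index, ∑ n ∈ (h i j).index,
          (g i j).left m ⊗ₜ[R] ((g i j).right m
            ⊗ₜ[R] ((h i j).left n ⊗ₜ[R] (h i j).right n))) := by
    rw [← r.eq, map_sum, map_sum]
    refine Finset.sum_congr rfl fun i _ => ?_
    rw [map_tmul, LinearMap.id_coe, id_eq, descProd_psi]
    have hc : comul (R := R) (descAntipode R H K act T (r.left i))
        = ∑ j ∈ (w i).index, ∑ m ∈ (g i j).index, ∑ n ∈ (h i j).index,
            act (antipode (R := R) (T ((g i j).right m))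
                ⊗ₜ antipode (R := R) ((h i j).right n))
              ⊗ₜ[R] act (antipode (R := R) (T ((g i j).left m))
                ⊗ₜ antipode (R := R) ((h i j).left n)) := by
      rw [descAntipode_repr act T _ (w i), map_sum]
      refine Finset.sum_congr rfl fun j _ => ?_
      have hca := LinearMap.congr_fun hmb.comul_act
        (antipode (R := R) (T ((w i).left j)) ⊗ₜ antipode (R := R) ((w i).right j))
      simp only [comp_apply] at hca
      rw [hca]
      have hHK : comul (R := R) (A := H ⊗[R] K)
          (antipode (R := R) (T ((w i).left j)) ⊗ₜ antipode (R := R) ((w i).right j))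
          = ∑ m ∈ (g i j).index, ∑ n ∈ (h i j).index,
              (antipode (R := R) (T ((g i j).right m))
                  ⊗ₜ[R] antipode (R := R) ((h i j).right n))
                ⊗ₜ[R] (antipode (R := R) (T ((g i j).left m))
                  ⊗ₜ[R] antipode (R := R) ((h i j).left n)) := by
        rw [TensorProduct.comul_tmul]
        rw [RBTool.comul_antipode_repr (reprT T hT _ (g i j)),
          RBTool.comul_antipode_repr (h i j), sum_tmul, map_sum]
        refine Finset.sum_congr rfl fun m _ => ?_
        rw [tmul_sum, map_sum]
        refine Finset.sum_congr rfl fun n _ => ?_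
        simp [reprT, tensorTensorTensorComm_tmul]
      rw [hHK, map_sum]
      refine Finset.sum_congr rfl fun m _ => ?_
      rw [map_sum]
      exact Finset.sum_congr rfl fun n _ => by simp
    rw [hc, map_sum, map_sum]
    refine Finset.sum_congr rfl fun j _ => ?_
    rw [map_sum, map_sum]
    refine Finset.sum_congr rfl fun m _ => ?_
    rw [map_sum, map_sum]
    refine Finset.sum_congr rfl fun n _ => ?_
    rw [psi_tmul, hΦt]
  -- Step 2+3: reshuffle inside `r.left i` using cocommutativity and collapse `m`
  have claimB : ∀ i ∈ r.index,
      Φ i (∑ j ∈ (w i).index, ∑ m ∈ (g i j).index, ∑ n ∈ (h i j).index,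
          (g i j).left m ⊗ₜ[R] ((g i j).right m
            ⊗ₜ[R] ((h i j).left n ⊗ₜ[R] (h i j).right n)))
        = ∑ j ∈ (w i).index, ∑ n ∈ (h i j).index,
            act (antipode (R := R) (T ((h i j).left n)) ⊗ₜ antipode (R := R) ((h i j).right n))
              * act (antipode (R := R) (T ((w i).left j)) ⊗ₜ r.right i) := by
    intro i _
    rw [← RBTool.D3_t2 (r.left i) (w i) (g i) (h i),
      RBTool.D3_t2' hco' (r.left i) (w i) (g i) (h i), map_sum]
    refine Finset.sum_congr rfl fun j _ => ?_
    rw [map_sum]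
    calc ∑ m ∈ (g i j).index, Φ i (∑ n ∈ (h i j).index,
            (g i j).left m ⊗ₜ[R] ((h i j).left n
              ⊗ₜ[R] ((g i j).right m ⊗ₜ[R] (h i j).right n)))
        = ∑ m ∈ (g i j).index, ∑ n ∈ (h i j).index,
            act (antipode (R := R) (T ((h i j).left n)) ⊗ₜ antipode (R := R) ((h i j).right n))
              * act (T (act (antipode (R := R) (T ((g i j).left m))
                  ⊗ₜ antipode (R := R) ((g i j).right m))) ⊗ₜ r.right i) := by
          refine Finset.sum_congr rfl fun m _ => ?_
          rw [map_sum]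
          exact Finset.sum_congr rfl fun n _ => hΦt i _ _ _ _
      _ = ∑ n ∈ (h i j).index, ∑ m ∈ (g i j).index,
            act (antipode (R := R) (T ((h i j).left n)) ⊗ₜ antipode (R := R) ((h i j).right n))
              * act (T (act (antipode (R := R) (T ((g i j).left m))
                  ⊗ₜ antipode (R := R) ((g i j).right m))) ⊗ₜ r.right i) :=
          Finset.sum_comm
      _ = _ := by
          refine Finset.sum_congr rfl fun n _ => ?_
          rw [← Finset.mul_sum]
          congr 1
          calc ∑ m ∈ (g i j).index,
                act (T (act (antipode (R := R) (T ((g i j).left m))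
                  ⊗ₜ antipode (R := R) ((g i j).right m))) ⊗ₜ r.right i)
              = act (T (∑ m ∈ (g i j).index,
                  act (antipode (R := R) (T ((g i j).left m))
                    ⊗ₜ antipode (R := R) ((g i j).right m))) ⊗ₜ r.right i) := by
                rw [map_sum, sum_tmul, map_sum]
            _ = act (T (descAntipode R H K act T ((w i).left j)) ⊗ₜ r.right i) := by
                rw [← descAntipode_repr act T _ (g i j)]
            _ = _ := by rw [hTST]
  -- Step 4: recognise Ψ on the canonical tree and change tree
  have claimC : (∑ i ∈ r.index, ∑ j ∈ (w i).index, ∑ n ∈ (h i j).index,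
        act (antipode (R := R) (T ((h i j).left n)) ⊗ₜ antipode (R := R) ((h i j).right n))
          * act (antipode (R := R) (T ((w i).left j)) ⊗ₜ r.right i))
      = ∑ i ∈ r.index, ∑ j ∈ (w i).index, ∑ k ∈ (q i).index,
          act (antipode (R := R) (T ((w i).right j)) ⊗ₜ antipode (R := R) ((q i).left k))
            * act (antipode (R := R) (T ((w i).left j)) ⊗ₜ (q i).right k) := by
    have e1 : (∑ i ∈ r.index, ∑ j ∈ (w i).index, ∑ n ∈ (h i j).index,
          act (antipode (R := R) (T ((h i j).left n)) ⊗ₜ antipode (R := R) ((h i j).right n))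
            * act (antipode (R := R) (T ((w i).left j)) ⊗ₜ r.right i))
        = Ψ (RBTool.D3 (R := R) a) := by
      rw [RBTool.D3_t3 a r w h, map_sum]
      refine Finset.sum_congr rfl fun i _ => ?_
      rw [map_sum]
      refine Finset.sum_congr rfl fun j _ => ?_
      rw [map_sum]
      exact Finset.sum_congr rfl fun n _ => (hΨt _ _ _ _).symm
    rw [e1, RBTool.D3_t2 a r w q, map_sum]
    refine Finset.sum_congr rfl fun i _ => ?_
    rw [map_sum]
    refine Finset.sum_congr rfl fun j _ => ?_
    rw [map_sum]
    exact Finset.sum_congr rfl fun k _ => hΨt _ _ _ _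
  -- Step 5: collapse
  rw [claimA, Finset.sum_congr rfl claimB, claimC]
  calc ∑ i ∈ r.index, ∑ j ∈ (w i).index, ∑ k ∈ (q i).index,
        act (antipode (R := R) (T ((w i).right j)) ⊗ₜ antipode (R := R) ((q i).left k))
          * act (antipode (R := R) (T ((w i).left j)) ⊗ₜ (q i).right k)
      = ∑ i ∈ r.index, counit (R := R) (r.right i)
          • (counit (R := R) (r.left i) • (1 : K)) := by
        refine Finset.sum_congr rfl fun i _ => ?_
        calc ∑ j ∈ (w i).index, ∑ k ∈ (q i).index,
              act (antipode (R := R) (T ((w i).right j)) ⊗ₜ antipode (R := R) ((q i).left k))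
                * act (antipode (R := R) (T ((w i).left j)) ⊗ₜ (q i).right k)
            = ∑ k ∈ (q i).index,
                act (antipode (R := R) (T (r.left i))
                  ⊗ₜ (antipode (R := R) ((q i).left k) * (q i).right k)) := by
              rw [Finset.sum_comm]
              refine Finset.sum_congr rfl fun k _ => ?_
              rw [hmb.act_mul, RBTool.comul_antipode_repr (reprT T hT _ (w i)), map_sum,
                map_sum]
              refine Finset.sum_congr rfl (fun j _ => ?_) |>.symm
              simp [reprT, mk_apply]
          _ = act (antipode (R := R) (T (r.left i))
                ⊗ₜ (∑ k ∈ (q i).index, antipode (R := R) ((q i).left k) * (q i).right k)) := by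
              rw [tmul_sum, map_sum]
          _ = counit (R := R) (r.right i) • (counit (R := R) (r.left i) • (1 : K)) := by
              rw [sum_antipode_mul_eq_smul (q i), tmul_smul, map_smul, hmb.act_one,
                RBTool.counit_antipode, counit_T T hT]
    _ = counit (R := R) a • (1 : K) := by
        have hs : ∑ i ∈ r.index, counit (R := R) (r.left i) * counit (R := R) (r.right i)
            = counit (R := R) a := by
          have hcg := congrArg (counit (R := R) (A := K)) (sum_counit_smul_right r)
          rw [map_sum] at hcg
          simpa [smul_eq_mul] using hcg
        rw [← hs, Finset.sum_smul]
        refine Finset.sum_congr rfl fun i _ => ?_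
        rw [smul_smul, mul_comm]

end RBAux
end Aux

/-- For a relative Rota–Baxter operator `T : K → H` with respect to a
cocommutative left `H`-module bialgebra `(K, ⇀)`, the descendent structure
`(K, *_T, 1, Δ, ε, S_T)` is a Hopf algebra, and `T` is an algebra
homomorphism from it to `H`. -/
theorem descendent_hopf (act : H ⊗[R] K →ₗ[R] K) (T : K →ₗ[R] H)
    (hmb : IsModuleBialgebra R H K act) (hT : IsCoalgHom R H K T)
    (hrb : IsRelRotaBaxter R H K act T) (hco : _root_.IsCocomm R K) :
    -- `*_T` is associative
    (∀ a b c : K,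
      descProd R H K act T (descProd R H K act T (a ⊗ₜ b) ⊗ₜ c)
        = descProd R H K act T (a ⊗ₜ descProd R H K act T (b ⊗ₜ c))) ∧
    -- `1` is a unit for `*_T`
    (∀ a : K, descProd R H K act T (a ⊗ₜ (1 : K)) = a) ∧
    (∀ a : K, descProd R H K act T ((1 : K) ⊗ₜ a) = a) ∧
    -- `Δ` and `ε` are algebra homomorphisms for `*_T`
    (Coalgebra.comul ∘ₗ descProd R H K act T
      = TensorProduct.map (descProd R H K act T) (descProd R H K act T)
          ∘ₗ (Coalgebra.comul (R := R) (A := K ⊗[R] K))) ∧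
    (Coalgebra.counit ∘ₗ descProd R H K act T
      = (Coalgebra.counit (R := R) (A := K ⊗[R] K))) ∧
    -- `S_T` is an antipode for `(K, *_T, 1, Δ, ε)`
    (∀ a : K,
      descProd R H K act T
          (TensorProduct.map LinearMap.id (descAntipode R H K act T)
            (Coalgebra.comul a))
        = Coalgebra.counit (R := R) a • (1 : K)) ∧
    (∀ a : K,
      descProd R H K act T
          (TensorProduct.map (descAntipode R H K act T) LinearMap.id
            (Coalgebra.comul a))
        = Coalgebra.counit (R := R) a • (1 : K)) ∧
    -- `T : K_T → H` is an algebra homomorphism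
    (∀ a b : K, T (descProd R H K act T (a ⊗ₜ b)) = T a * T b) ∧
    T (1 : K) = (1 : H) := by
  refine ⟨?_, ?_, ?_, ?_, ?_, ?_, ?_, ?_, ?_⟩
  · exact fun a b c => RBAux.assoc_desc act T hT hmb hrb hco a b c
  · exact fun a => RBAux.right_unit act T hT hmb a
  · exact fun a => RBAux.left_unit act T hT hmb hrb a
  · exact RBAux.comul_hom act T hT hmb hco
  · exact RBAux.counit_hom act T hT hmb
  · exact fun a => RBAux.right_antipode act T hT hmb a
  · exact fun a => RBAux.left_antipode act T hT hmb hrb hco a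
  · exact fun a b => (hrb a b).symm
  · exact RBAux.T_one act T hT hmb hrb
end

section
/- Let T : K → H be a relative Rota-Baxter operator with respect to a cocommutative H-module bialgebra (K, ⇀), where H and K are cocommutative. Then the graph Gr_T = {a₁ ⊗ T(a₂) : a ∈ K} is closed under the multiplication of the smash product K ⋊ H: (a₁ # T(a₂))(b₁ # T(b₂)) = (a *_T b)₁ # T((a *_T b)₂), where a *_T b = a₁(T(a₂) ⇀ b). -/
/-!
Relative Rota–Baxter operators on Hopf algebras (Li–Sheng–Tang).
`K` is a left `H`-module bialgebra via `act : H ⊗ K →ₗ K`, and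
`T : K →ₗ H` is a coalgebra homomorphism satisfying the relative
Rota–Baxter identity `T(a)·T(b) = T(a₁·(T(a₂) ⇀ b))`.
Sweedler sums are expressed by applying linear maps to `Coalgebra.comul`.
-/

open TensorProduct Coalgebra LinearMap HopfAlgebra

variable (R H K : Type*) [CommRing R] [Ring H] [HopfAlgebra R H]
  [Ring K] [HopfAlgebra R K]

/-- The multiplication of the smash product `K ⋊ H`:
`(a # x)(b # y) = a·(x₁ ⇀ b) # x₂·y`. -/
noncomputable def smashMul (act : H ⊗[R] K →ₗ[R] K) :
    (K ⊗[R] H) ⊗[R] (K ⊗[R] H) →ₗ[R] K ⊗[R] H :=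
  TensorProduct.map (LinearMap.mul' R K) LinearMap.id
    ∘ₗ (TensorProduct.assoc R K K H).symm.toLinearMap
    ∘ₗ TensorProduct.map LinearMap.id
        (TensorProduct.map act (LinearMap.mul' R H)
          ∘ₗ (TensorProduct.tensorTensorTensorComm R H H K H).toLinearMap)
    ∘ₗ (TensorProduct.assoc R K (H ⊗[R] H) (K ⊗[R] H)).toLinearMap
    ∘ₗ TensorProduct.map (TensorProduct.map LinearMap.id Coalgebra.comul)
        LinearMap.id

/-- The graph embedding `a ↦ a₁ ⊗ T(a₂)` of `K` into `K ⊗ H`, whose image is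
the graph `Gr_T = {a₁ ⊗ T(a₂) : a ∈ K}`. -/
noncomputable def graphEmb (T : K →ₗ[R] H) : K →ₗ[R] K ⊗[R] H :=
  TensorProduct.map LinearMap.id T ∘ₗ Coalgebra.comul


section Aux

variable {S : Type*} [CommRing S]
variable {M₁ M₂ M₃ N₁ N₂ N₃ : Type*}
  [AddCommGroup M₁] [AddCommGroup M₂] [AddCommGroup M₃]
  [AddCommGroup N₁] [AddCommGroup N₂] [AddCommGroup N₃]
  [Module S M₁] [Module S M₂] [Module S M₃]
  [Module S N₁] [Module S N₂] [Module S N₃]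

theorem map_map_apply (f₁ : M₁ →ₗ[S] M₂) (f₂ : M₂ →ₗ[S] M₃)
    (g₁ : N₁ →ₗ[S] N₂) (g₂ : N₂ →ₗ[S] N₃) (z : M₁ ⊗[S] N₁) :
    TensorProduct.map f₂ g₂ (TensorProduct.map f₁ g₁ z)
      = TensorProduct.map (f₂ ∘ₗ f₁) (g₂ ∘ₗ g₁) z :=
  (LinearMap.congr_fun (TensorProduct.map_comp f₂ g₂ f₁ g₁) z).symm

end Aux

/-- The intermediate map through which the left-hand side factors. -/
noncomputable def mapC (act : H ⊗[R] K →ₗ[R] K) (T : K →ₗ[R] H) :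
    (K ⊗[R] (K ⊗[R] K)) ⊗[R] (K ⊗[R] K) →ₗ[R] K ⊗[R] H :=
  TensorProduct.map (LinearMap.mul' R K) LinearMap.id
    ∘ₗ (TensorProduct.assoc R K K H).symm.toLinearMap
    ∘ₗ TensorProduct.map LinearMap.id
        (TensorProduct.map act (LinearMap.mul' R H)
          ∘ₗ (TensorProduct.tensorTensorTensorComm R H H K H).toLinearMap)
    ∘ₗ (TensorProduct.assoc R K (H ⊗[R] H) (K ⊗[R] H)).toLinearMap
    ∘ₗ TensorProduct.map
        (TensorProduct.map LinearMap.id (TensorProduct.map T T))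
        (TensorProduct.map LinearMap.id T)

/-- The intermediate map through which the right-hand side factors. -/
noncomputable def mapB (act : H ⊗[R] K →ₗ[R] K) (T : K →ₗ[R] H) :
    ((K ⊗[R] K) ⊗[R] (K ⊗[R] K)) ⊗[R] (K ⊗[R] K) →ₗ[R] K ⊗[R] H :=
  TensorProduct.map LinearMap.id T
    ∘ₗ LinearMap.mul' R (K ⊗[R] K)
    ∘ₗ TensorProduct.map LinearMap.id
        (TensorProduct.map act act
          ∘ₗ (TensorProduct.tensorTensorTensorComm R H H K K).toLinearMap)
    ∘ₗ (TensorProduct.assoc R (K ⊗[R] K) (H ⊗[R] H) (K ⊗[R] K)).toLinearMap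
    ∘ₗ TensorProduct.map
        (TensorProduct.map LinearMap.id (TensorProduct.map T T)) LinearMap.id

set_option maxHeartbeats 1600000 in
set_option synthInstance.maxHeartbeats 1000000 in
/-- For a relative Rota–Baxter operator `T : K → H` (with `H`, `K`
cocommutative), the graph `Gr_T` is closed under the smash product
multiplication: `(a₁ # T(a₂))(b₁ # T(b₂)) = (a *_T b)₁ # T((a *_T b)₂)`. -/
theorem graph_closed (act : H ⊗[R] K →ₗ[R] K) (T : K →ₗ[R] H)
    (hmb : IsModuleBialgebra R H K act) (hT : IsCoalgHom R H K T)
    (hrb : IsRelRotaBaxter R H K act T)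
    (hcoH : _root_.IsCocomm R H) (hcoK : _root_.IsCocomm R K) (a b : K) :
    smashMul R H K act (graphEmb R H K T a ⊗ₜ graphEmb R H K T b)
      = graphEmb R H K T (descProd R H K act T (a ⊗ₜ b)) := by
  classical
  -- notation
  set DD : K →ₗ[R] K ⊗[R] K := Coalgebra.comul with hDD
  set EE : H →ₗ[R] H ⊗[R] H := Coalgebra.comul with hEE
  -- pointwise consequences of the hypotheses
  have hTc : ∀ y : K, EE (T y) = TensorProduct.map T T (DD y) := fun y =>
    LinearMap.congr_fun hT.comul_comp y
  have hactc : ∀ (x : H) (k : K),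
      DD (act (x ⊗ₜ k)) = TensorProduct.map act act
        ((TensorProduct.tensorTensorTensorComm R H H K K) (EE x ⊗ₜ DD k)) :=
    fun x k => LinearMap.congr_fun hmb.comul_act (x ⊗ₜ k)
  have hcoKm : (TensorProduct.comm R K K).toLinearMap ∘ₗ DD = DD :=
    LinearMap.ext hcoK
  -- Sweedler elements
  set u₃ : K ⊗[R] (K ⊗[R] K) := TensorProduct.map LinearMap.id DD (DD a) with hu₃
  set u' : (K ⊗[R] K) ⊗[R] (K ⊗[R] K) := TensorProduct.map DD DD (DD a) with hu'
  set v : K ⊗[R] K := DD b with hv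
  -- Step 1: the left-hand side factors through `mapC`.
  have hL : smashMul R H K act (graphEmb R H K T a ⊗ₜ graphEmb R H K T b)
      = mapC R H K act T (u₃ ⊗ₜ v) := by
    have h1 : TensorProduct.map (LinearMap.id (R := R) (M := K)) EE
        (TensorProduct.map LinearMap.id T (DD a))
        = TensorProduct.map LinearMap.id (TensorProduct.map T T) u₃ := by
      rw [hu₃, map_map_apply, map_map_apply, LinearMap.id_comp, hT.comul_comp]
    simp only [smashMul, graphEmb, mapC, LinearMap.comp_apply,
      TensorProduct.map_tmul, LinearMap.id_coe, id_eq]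
    rw [h1]
  -- comultiplication is multiplicative on `K`
  have hDmul : ∀ z : K ⊗[R] K, DD (LinearMap.mul' R K z)
      = LinearMap.mul' R (K ⊗[R] K) (TensorProduct.map DD DD z) := by
    have hmap : DD ∘ₗ LinearMap.mul' R K
        = LinearMap.mul' R (K ⊗[R] K) ∘ₗ TensorProduct.map DD DD := by
      ext x y
      simp [hDD, Bialgebra.comul_mul]
    exact fun z => LinearMap.congr_fun hmap z
  -- Step 2: the right-hand side factors through `mapB`.
  have hR : graphEmb R H K T (descProd R H K act T (a ⊗ₜ b))
      = mapB R H K act T (u' ⊗ₜ v) := by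
    have h2 : TensorProduct.map DD DD
          ∘ₗ TensorProduct.map LinearMap.id (act ∘ₗ TensorProduct.map T LinearMap.id)
          ∘ₗ (TensorProduct.assoc R K K K).toLinearMap
        = TensorProduct.map LinearMap.id
            (TensorProduct.map act act
              ∘ₗ (TensorProduct.tensorTensorTensorComm R H H K K).toLinearMap)
          ∘ₗ (TensorProduct.assoc R (K ⊗[R] K) (H ⊗[R] H) (K ⊗[R] K)).toLinearMap
          ∘ₗ TensorProduct.map
              (TensorProduct.map DD (TensorProduct.map T T ∘ₗ DD)) DD := by
      ext x y k
      simp only [LinearMap.comp_apply, TensorProduct.map_tmul, LinearMap.id_coe, id_eq,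
        LinearEquiv.coe_coe, TensorProduct.assoc_tmul, TensorProduct.AlgebraTensorModule.curry_apply,
        TensorProduct.curry_apply, LinearMap.coe_restrictScalars]
      rw [hactc, hTc]
    have h3 : TensorProduct.map DD (TensorProduct.map T T ∘ₗ DD) (DD a)
        = TensorProduct.map LinearMap.id (TensorProduct.map T T) u' := by
      rw [hu', map_map_apply, LinearMap.id_comp]
    have h2' := LinearMap.congr_fun h2 (DD a ⊗ₜ[R] b)
    simp only [LinearMap.comp_apply, TensorProduct.map_tmul, LinearEquiv.coe_coe] at h2'
    rw [h3] at h2'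
    simp only [graphEmb, descProd, mapB, LinearMap.comp_apply,
      TensorProduct.map_tmul, LinearMap.id_coe, id_eq, LinearEquiv.coe_coe]
    rw [← hDD, hDmul, h2', hv]
  have m1 : u' = TensorProduct.map LinearMap.id DD
      ((TensorProduct.assoc R K K K).symm u₃) := by
    rw [hu₃, hu']
    have : (TensorProduct.assoc R K K K).symm (LinearMap.lTensor K DD (DD a))
        = LinearMap.rTensor K DD (DD a) := Coalgebra.coassoc_symm_apply a
    rw [show TensorProduct.map (LinearMap.id (R := R) (M := K)) DD (DD a)
          = LinearMap.lTensor K DD (DD a) from rfl, this]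
    rw [show LinearMap.rTensor K DD (DD a)
          = TensorProduct.map DD LinearMap.id (DD a) from rfl]
    rw [map_map_apply, LinearMap.id_comp, LinearMap.comp_id]
  -- Step 3: cocommutativity of `K` makes `u'` symmetric.
  have hC : (TensorProduct.tensorTensorTensorComm R K K K K) u' = u' := by
    -- abbreviations
    have s1 : TensorProduct.map (LinearMap.id (R := R) (M := K ⊗[R] K)) DD
          ∘ₗ (TensorProduct.assoc R K K K).symm.toLinearMap
        = (TensorProduct.assoc R K K (K ⊗[R] K)).symm.toLinearMap
          ∘ₗ TensorProduct.map LinearMap.id (TensorProduct.map LinearMap.id DD) := by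
      ext y1 y2 y3
      simp
    have hY : u' = (TensorProduct.assoc R K K (K ⊗[R] K)).symm
        (TensorProduct.map LinearMap.id (TensorProduct.map LinearMap.id DD) u₃) := by
      rw [m1]
      exact LinearMap.congr_fun s1 u₃
    -- rewrite the inner `Δ₃` using coassociativity
    have hco3 : TensorProduct.map (LinearMap.id (R := R) (M := K)) DD ∘ₗ DD
        = (TensorProduct.assoc R K K K).toLinearMap
          ∘ₗ TensorProduct.map DD LinearMap.id ∘ₗ DD := by
      apply LinearMap.ext; intro x
      exact (Coalgebra.coassoc_apply x).symm
    set Y : K ⊗[R] ((K ⊗[R] K) ⊗[R] K) :=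
      TensorProduct.map LinearMap.id (TensorProduct.map DD LinearMap.id ∘ₗ DD) (DD a) with hYdef
    have hZ : TensorProduct.map LinearMap.id (TensorProduct.map LinearMap.id DD) u₃
        = TensorProduct.map LinearMap.id (TensorProduct.assoc R K K K).toLinearMap Y := by
      rw [hu₃, hYdef, map_map_apply, map_map_apply]
      simp only [LinearMap.id_comp]
      rw [hco3]
    -- key structural identity with the comm swap
    have cg : (TensorProduct.tensorTensorTensorComm R K K K K).toLinearMap
          ∘ₗ (TensorProduct.assoc R K K (K ⊗[R] K)).symm.toLinearMap
          ∘ₗ TensorProduct.map LinearMap.id (TensorProduct.assoc R K K K).toLinearMap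
        = (TensorProduct.assoc R K K (K ⊗[R] K)).symm.toLinearMap
          ∘ₗ TensorProduct.map LinearMap.id (TensorProduct.assoc R K K K).toLinearMap
          ∘ₗ TensorProduct.map LinearMap.id
              (TensorProduct.map (TensorProduct.comm R K K).toLinearMap LinearMap.id) := by
      ext y1 y2 y3 y4
      simp
    have hYfix : TensorProduct.map (LinearMap.id (R := R) (M := K))
        (TensorProduct.map (TensorProduct.comm R K K).toLinearMap LinearMap.id) Y = Y := by
      rw [hYdef, map_map_apply]
      simp only [LinearMap.id_comp]
      rw [← LinearMap.comp_assoc, ← TensorProduct.map_comp, hcoKm]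
      simp only [LinearMap.id_comp]
    have cg' := LinearMap.congr_fun cg Y
    simp only [LinearMap.comp_apply, LinearEquiv.coe_coe] at cg'
    rw [hY, hZ, cg', hYfix, ← hZ, ← hY]
  -- Step 4: the key comparison, using the Rota–Baxter identity.
  have hKey : mapC R H K act T
      = mapB R H K act T
        ∘ₗ TensorProduct.map
            ((TensorProduct.tensorTensorTensorComm R K K K K).toLinearMap
              ∘ₗ TensorProduct.map LinearMap.id DD
              ∘ₗ (TensorProduct.assoc R K K K).symm.toLinearMap) LinearMap.id := by
    ext y1 y2 y3 b1 b2
    have key : ∀ z : K ⊗[R] K,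
        mapB R H K act T
          ((TensorProduct.tensorTensorTensorComm R K K K K) ((y1 ⊗ₜ y2) ⊗ₜ z) ⊗ₜ (b1 ⊗ₜ b2))
        = (y1 * act (T y2 ⊗ₜ b1)) ⊗ₜ
            T (LinearMap.mul' R K
              (TensorProduct.map LinearMap.id (act ∘ₗ TensorProduct.map T LinearMap.id)
                ((TensorProduct.assoc R K K K) (z ⊗ₜ b2)))) := by
      intro z
      induction z using TensorProduct.induction_on with
      | zero =>
          simp only [TensorProduct.tmul_zero, TensorProduct.zero_tmul, LinearMap.map_zero,
            LinearEquiv.map_zero]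
      | tmul c d =>
          simp [mapB, Algebra.TensorProduct.tmul_mul_tmul]
      | add z1 z2 h1 h2 =>
          simp only [TensorProduct.tmul_add, TensorProduct.add_tmul, LinearMap.map_add,
            LinearEquiv.map_add, h1, h2]
    have hmt : (TensorProduct.map
            ((TensorProduct.tensorTensorTensorComm R K K K K).toLinearMap
              ∘ₗ TensorProduct.map LinearMap.id DD
              ∘ₗ (TensorProduct.assoc R K K K).symm.toLinearMap) LinearMap.id)
          ((y1 ⊗ₜ[R] (y2 ⊗ₜ[R] y3)) ⊗ₜ[R] (b1 ⊗ₜ[R] b2))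
        = (TensorProduct.tensorTensorTensorComm R K K K K) ((y1 ⊗ₜ[R] y2) ⊗ₜ[R] DD y3)
            ⊗ₜ[R] (b1 ⊗ₜ[R] b2) := by
      simp
    simp only [TensorProduct.AlgebraTensorModule.curry_apply, TensorProduct.curry_apply,
      LinearMap.coe_restrictScalars, LinearMap.comp_apply]
    rw [hmt, key (DD y3)]
    have hdp : LinearMap.mul' R K
          (TensorProduct.map LinearMap.id (act ∘ₗ TensorProduct.map T LinearMap.id)
            ((TensorProduct.assoc R K K K) (DD y3 ⊗ₜ b2)))
        = descProd R H K act T (y3 ⊗ₜ b2) := by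
      simp [descProd, hDD]
    rw [hdp, ← hrb y3 b2]
    simp [mapC]
  -- Assemble everything.
  rw [hL, hR, hKey]
  simp only [LinearMap.comp_apply, TensorProduct.map_tmul, LinearMap.id_coe, id_eq,
    LinearEquiv.coe_coe]
  rw [← m1, hC]
end

section
/- Let H and K be cocommutative Hopf algebras with K a left H-module bialgebra via ⇀, and let T : K → H be a coalgebra homomorphism. If the graph Gr_T = {a₁ ⊗ T(a₂) : a ∈ K} is a subalgebra of the smash product Hopf algebra K ⋊ H, then T is a relative Rota-Baxter operator, i.e., T(a)T(b) = T(a₁(T(a₂) ⇀ b)) for all a, b ∈ K. -/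
/-!
Relative Rota–Baxter operators on Hopf algebras (Li–Sheng–Tang).
`K` is a left `H`-module bialgebra via `act : H ⊗ K →ₗ K`, and
`T : K →ₗ H` is a coalgebra homomorphism satisfying the relative
Rota–Baxter identity `T(a)·T(b) = T(a₁·(T(a₂) ⇀ b))`.
Sweedler sums are expressed by applying linear maps to `Coalgebra.comul`.
-/

open TensorProduct Coalgebra LinearMap HopfAlgebra

variable (R H K : Type*) [CommRing R] [Ring H] [HopfAlgebra R H]
  [Ring K] [HopfAlgebra R K]

-- auxiliary lemmas
lemma smashMul_tmul (act : H ⊗[R] K →ₗ[R] K) (a b : K) (x y : H) {ι : Type*}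
    (rx : Coalgebra.Repr R x ι) :
    smashMul R H K act ((a ⊗ₜ x) ⊗ₜ (b ⊗ₜ y))
      = ∑ i ∈ rx.index, (a * act (rx.left i ⊗ₜ b)) ⊗ₜ[R] (rx.right i * y) := by
  simp only [smashMul, LinearMap.coe_comp, Function.comp_apply, TensorProduct.map_tmul,
    LinearMap.id_coe, id_eq]
  rw [← rx.eq]
  simp [TensorProduct.sum_tmul, TensorProduct.tmul_sum, map_sum,
    TensorProduct.tensorTensorTensorComm_tmul, LinearMap.mul'_apply]

lemma graphEmb_eq (T : K →ₗ[R] H) (a : K) {ι : Type*} (ra : Coalgebra.Repr R a ι) :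
    graphEmb R H K T a = ∑ i ∈ ra.index, ra.left i ⊗ₜ[R] T (ra.right i) := by
  simp [graphEmb, ← ra.eq, map_sum]

lemma descProd_tmul (act : H ⊗[R] K →ₗ[R] K) (T : K →ₗ[R] H) (a b : K) {ι : Type*}
    (ra : Coalgebra.Repr R a ι) :
    descProd R H K act T (a ⊗ₜ b)
      = ∑ i ∈ ra.index, ra.left i * act (T (ra.right i) ⊗ₜ b) := by
  simp only [descProd, LinearMap.coe_comp, Function.comp_apply, TensorProduct.map_tmul,
    LinearMap.id_coe, id_eq]
  rw [← ra.eq]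
  simp [TensorProduct.sum_tmul, map_sum, LinearMap.mul'_apply]

noncomputable def reprT (T : K →ₗ[R] H) (hT : IsCoalgHom R H K T) {c : K} {ι : Type*}
    (r : Coalgebra.Repr R c ι) : Coalgebra.Repr R (T c) ι where
  index := r.index
  left := T ∘ r.left
  right := T ∘ r.right
  eq := by
    have := congr($(hT.comul_comp) c)
    simp only [LinearMap.coe_comp, Function.comp_apply] at this
    simp only [Function.comp_apply]
    rw [this, ← r.eq, map_sum]
    simp

lemma sum_counit_smul {a : K} {ι : Type*} (r : Coalgebra.Repr R a ι) :
    ∑ i ∈ r.index, Coalgebra.counit (R := R) (r.left i) • r.right i = a := by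
  have := congrArg (TensorProduct.lid R K) (sum_counit_tmul_eq (R := R) r)
  rw [map_sum] at this
  simp only [TensorProduct.lid_tmul] at this
  simpa using this

lemma sum_smul_counit {a : K} {ι : Type*} (r : Coalgebra.Repr R a ι) :
    ∑ i ∈ r.index, Coalgebra.counit (R := R) (r.right i) • r.left i = a := by
  have := congrArg (TensorProduct.rid R K) (sum_tmul_counit_eq (R := R) r)
  rw [map_sum] at this
  simp only [TensorProduct.rid_tmul] at this
  simpa using this

/-- If the graph `Gr_T = {a₁ ⊗ T(a₂) : a ∈ K}` of a coalgebra homomorphism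
`T : K → H` is closed under the multiplication of the smash product `K ⋊ H`
(`H`, `K` cocommutative, `K` a left `H`-module bialgebra), then `T` is a
relative Rota–Baxter operator. -/
theorem graph_subalgebra_to_relRotaBaxter (act : H ⊗[R] K →ₗ[R] K)
    (T : K →ₗ[R] H) (hmb : IsModuleBialgebra R H K act)
    (hT : IsCoalgHom R H K T) (hcoH : _root_.IsCocomm R H) (hcoK : _root_.IsCocomm R K)
    (hgr : ∀ a b : K, ∃ w : K,
      smashMul R H K act (graphEmb R H K T a ⊗ₜ graphEmb R H K T b)
        = graphEmb R H K T w) :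
    IsRelRotaBaxter R H K act T := by
  intro a b
  obtain ⟨w, hw⟩ := hgr a b
  have hεT : ∀ c : K, Coalgebra.counit (R := R) (T c) = Coalgebra.counit (R := R) c :=
    fun c => congr($(hT.counit_comp) c)
  have hεact : ∀ (x : H) (c : K),
      Coalgebra.counit (R := R) (act (x ⊗ₜ c))
        = Coalgebra.counit (R := R) x * Coalgebra.counit (R := R) c := by
    intro x c
    have := congr($(hmb.counit_act) (x ⊗ₜ c))
    rw [mul_comm]
    simpa using this
  set ra := ℛ R a with hra
  set rb := ℛ R b with hrb
  -- the expansion of the smash product of the two graph elements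
  have hexp : smashMul R H K act (graphEmb R H K T a ⊗ₜ graphEmb R H K T b)
      = ∑ i ∈ ra.index, ∑ j ∈ rb.index, ∑ k ∈ (ℛ R (ra.right i)).index,
          (ra.left i * act (T ((ℛ R (ra.right i)).left k) ⊗ₜ rb.left j))
            ⊗ₜ[R] (T ((ℛ R (ra.right i)).right k) * T (rb.right j)) := by
    rw [graphEmb_eq R H K T a ra, graphEmb_eq R H K T b rb,
      TensorProduct.sum_tmul]
    rw [map_sum]
    refine Finset.sum_congr rfl fun i _ => ?_
    rw [TensorProduct.tmul_sum, map_sum]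
    refine Finset.sum_congr rfl fun j _ => ?_
    exact smashMul_tmul R H K act _ _ _ _ (reprT R H K T hT (ℛ R (ra.right i)))
  -- two projections
  set P1 : K ⊗[R] H →ₗ[R] K :=
    (TensorProduct.rid R K).toLinearMap ∘ₗ
      (Coalgebra.counit (R := R) (A := H)).lTensor K with hP1
  set P2 : K ⊗[R] H →ₗ[R] H :=
    (TensorProduct.lid R H).toLinearMap ∘ₗ
      (Coalgebra.counit (R := R) (A := K)).rTensor H with hP2
  have hP1tmul : ∀ (u : K) (x : H), P1 (u ⊗ₜ x) = Coalgebra.counit (R := R) x • u := by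
    intro u x; simp [hP1]
  have hP2tmul : ∀ (u : K) (x : H), P2 (u ⊗ₜ x) = Coalgebra.counit (R := R) u • x := by
    intro u x; simp [hP2]
  -- P1 of the graph of w is w, P2 is T w
  have hP1w : P1 (graphEmb R H K T w) = w := by
    rw [graphEmb_eq R H K T w (ℛ R w), map_sum]
    simp only [hP1tmul, hεT]
    exact sum_smul_counit R K (ℛ R w)
  have hP2w : P2 (graphEmb R H K T w) = T w := by
    rw [graphEmb_eq R H K T w (ℛ R w), map_sum]
    simp only [hP2tmul]
    have : ∑ i ∈ (ℛ R w).index,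
        Coalgebra.counit (R := R) ((ℛ R w).left i) • T ((ℛ R w).right i)
        = T (∑ i ∈ (ℛ R w).index,
            Coalgebra.counit (R := R) ((ℛ R w).left i) • (ℛ R w).right i) := by
      rw [map_sum]; simp
    rw [this, sum_counit_smul R K (ℛ R w)]
  -- P1 of the expansion is the descendent product
  have hP1exp : P1 (smashMul R H K act (graphEmb R H K T a ⊗ₜ graphEmb R H K T b))
      = descProd R H K act T (a ⊗ₜ b) := by
    rw [hexp, descProd_tmul R H K act T a b ra, map_sum]
    refine Finset.sum_congr rfl fun i _ => ?_
    have hinner : ∀ j ∈ rb.index,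
        P1 (∑ k ∈ (ℛ R (ra.right i)).index,
          (ra.left i * act (T ((ℛ R (ra.right i)).left k) ⊗ₜ rb.left j))
            ⊗ₜ[R] (T ((ℛ R (ra.right i)).right k) * T (rb.right j)))
        = Coalgebra.counit (R := R) (rb.right j) •
            (ra.left i * act (T (ra.right i) ⊗ₜ rb.left j)) := by
      intro j _
      rw [map_sum]
      simp only [hP1tmul, Bialgebra.counit_mul, hεT]
      conv_rhs => rw [← sum_smul_counit R K (ℛ R (ra.right i))]
      rw [map_sum]
      simp only [map_smul, TensorProduct.sum_tmul, TensorProduct.smul_tmul', map_sum,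
        Finset.mul_sum, mul_smul_comm, Finset.smul_sum, smul_smul]
      refine Finset.sum_congr rfl fun k _ => ?_
      rw [← TensorProduct.smul_tmul', map_smul, mul_smul_comm, smul_smul, mul_comm]
    rw [map_sum, Finset.sum_congr rfl hinner]
    conv_rhs => rw [← sum_smul_counit R K rb]
    simp only [TensorProduct.tmul_sum, TensorProduct.tmul_smul, map_sum, map_smul,
      Finset.mul_sum, mul_smul_comm]
  -- P2 of the expansion is T a * T b
  have hP2exp : P2 (smashMul R H K act (graphEmb R H K T a ⊗ₜ graphEmb R H K T b))
      = T a * T b := by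
    rw [hexp, map_sum]
    have per_i : ∀ i ∈ ra.index,
        P2 (∑ j ∈ rb.index, ∑ k ∈ (ℛ R (ra.right i)).index,
          (ra.left i * act (T ((ℛ R (ra.right i)).left k) ⊗ₜ rb.left j))
            ⊗ₜ[R] (T ((ℛ R (ra.right i)).right k) * T (rb.right j)))
        = Coalgebra.counit (R := R) (ra.left i) • (T (ra.right i) * T b) := by
      intro i _
      rw [map_sum]
      have hj : ∀ j ∈ rb.index,
          P2 (∑ k ∈ (ℛ R (ra.right i)).index,
            (ra.left i * act (T ((ℛ R (ra.right i)).left k) ⊗ₜ rb.left j))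
              ⊗ₜ[R] (T ((ℛ R (ra.right i)).right k) * T (rb.right j)))
          = (Coalgebra.counit (R := R) (ra.left i)
              * Coalgebra.counit (R := R) (rb.left j))
              • (T (ra.right i) * T (rb.right j)) := by
        intro j _
        rw [map_sum]
        simp only [hP2tmul, Bialgebra.counit_mul, hεact, hεT]
        conv_rhs => rw [← sum_counit_smul R K (ℛ R (ra.right i))]
        rw [map_sum]
        simp only [map_smul, smul_mul_assoc, Finset.sum_mul, Finset.smul_sum, smul_smul]
        refine Finset.sum_congr rfl fun k _ => ?_
        congr 1
        ring
      rw [Finset.sum_congr rfl hj]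
      conv_rhs =>
        rw [show T b = T (∑ j ∈ rb.index,
          Coalgebra.counit (R := R) (rb.left j) • rb.right j) from by
            rw [sum_counit_smul R K rb]]
      rw [map_sum]
      simp only [map_smul, Finset.mul_sum, mul_smul_comm, Finset.smul_sum, smul_smul]
    rw [Finset.sum_congr rfl per_i]
    conv_rhs =>
      rw [show T a = T (∑ i ∈ ra.index,
        Coalgebra.counit (R := R) (ra.left i) • ra.right i) from by
          rw [sum_counit_smul R K ra]]
    rw [map_sum]
    simp only [map_smul, Finset.sum_mul, smul_mul_assoc]
  have h1 : descProd R H K act T (a ⊗ₜ b) = w := by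
    rw [← hP1exp, hw, hP1w]
  have h2 : T a * T b = T w := by
    rw [← hP2exp, hw, hP2w]
  rw [h1, ← h2]
end
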